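/- arXiv:math/0511137 — 6 statements merged into one kernel-verified Lean document; each statement's English description precedes it below -/
import Mathlib

section
/- Let λ ∈ ℂ with |λ| = 1, and let K, K' be positive definite maps on ℤ² satisfying K((m+1,n),(m'+1,n')) = K((m,n),(m',n')) and K((m,n+1),(m',n'+1)) = λ^{m-m'} K((m,n),(m',n')) for all m,n,m',n' ∈ ℤ (and likewise for K'). Let (H_K, U_K, V_K, ξ₀) and (H_{K'}, U_{K'}, V_{K'}, ξ₀') be the associated Gabor type cyclic systems. Let L : ℤ² × ℤ² → ℂ with L² ≤ c K K' for some c > 0. If L satisfies L((m+1,n),(m'+1,n')) = L((m,n),(m',n')) and L((m,n+1),(m',n'+1)) = λ^{m-m'} L((m,n),(m',n')) for all m,n,m',n' ∈ ℤ, then there is a unique bounded operator S : H_K → H_{K'} such that S U_K = U_{K'} S, S V_K = V_{K'} S, and ⟨S U_K^m V_K^n ξ₀, U_{K'}^{m'} V_{K'}^{n'} ξ₀'⟩ = L((m,n),(m',n')) for all m,n,m',n' ∈ ℤ; moreover ‖S‖ ≤ √c. Conversely, if S : H_K → H_{K'} is bounded and satisfies S U_K = U_{K'} S and S V_K = V_{K'}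 S, then there exists a unique L : ℤ² × ℤ² → ℂ with ⟨S U_K^m V_K^n ξ₀, U_{K'}^{m'} V_{K'}^{n'} ξ₀'⟩ = L((m,n),(m',n')) for all m,n,m',n' ∈ ℤ, and L satisfies the two covariance relations above as well as L² ≤ ‖S‖² K K'. -/
open scoped InnerProductSpace ComplexOrder Classical
open Complex

noncomputable section

/-- A kernel `K : X × X → ℂ` is positive definite if every finite quadratic form
`∑ i j, K (x i) (x j) * ξ i * conj (ξ j)` is a nonnegative real number
(expressed via the partial order on `ℂ`). -/
def IsPosDefKernel {X : Type*} (K : X → X → ℂ) : Prop :=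
  ∀ (n : ℕ) (x : Fin n → X) (ξ : Fin n → ℂ),
    0 ≤ ∑ i, ∑ j, K (x i) (x j) * ξ i * (starRingEnd ℂ) (ξ j)

/-- `(H, v)` is a Kolmogorov representation of the kernel `K`: the span of the range of `v`
is dense and inner products of the `v x` reproduce `K`.  Mathlib's inner product is
conjugate-linear in the first variable, while the paper's is conjugate-linear in the second,
so the paper's `⟨v x, v y⟩ = K x y` reads `⟪v y, v x⟫_ℂ = K x y` here. -/
def IsKolmogorovRep {X : Type*} (K : X → X → ℂ) (H : Type*) [NormedAddCommGroup H]
    [InnerProductSpace ℂ H] (v : X → H) : Prop :=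
  Dense (↑(Submodule.span ℂ (Set.range v)) : Set H) ∧
    ∀ x y : X, ⟪v y, v x⟫_ℂ = K x y

/-- `L² ≤ c K K'` in the sense of Dutkay. -/
def KernelSqLE {X : Type*} (L K K' : X → X → ℂ) (c : ℝ) : Prop :=
  ∀ (m n : ℕ) (x : Fin m → X) (y : Fin n → X) (ξ : Fin m → ℂ) (η : Fin n → ℂ),
    ‖∑ i, ∑ j, L (x i) (y j) * ξ i * (starRingEnd ℂ) (η j)‖ ^ 2 ≤
      c * (∑ i, ∑ i', K (x i) (x i') * ξ i * (starRingEnd ℂ) (ξ i')).re *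
        (∑ j, ∑ j', K' (y j) (y j') * η j * (starRingEnd ℂ) (η j')).re

/-- `K' ≤ c K` for kernels, via the partial order on `ℂ`. -/
def KernelLE {X : Type*} (K' K : X → X → ℂ) (c : ℝ) : Prop :=
  ∀ (n : ℕ) (x : Fin n → X) (ξ : Fin n → ℂ),
    ∑ i, ∑ j, K' (x i) (x j) * ξ i * (starRingEnd ℂ) (ξ j) ≤
      (c : ℂ) * ∑ i, ∑ j, K (x i) (x j) * ξ i * (starRingEnd ℂ) (ξ j)

/-- A bounded operator is positive if `⟨S v, v⟩ ≥ 0` for all `v` (paper convention;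
in Mathlib's convention this is `0 ≤ ⟪v, S v⟫`). -/
def IsPositiveOp {H : Type*} [NormedAddCommGroup H] [InnerProductSpace ℂ H]
    (S : H →L[ℂ] H) : Prop :=
  ∀ v : H, 0 ≤ ⟪v, S v⟫_ℂ

/-- A family of vectors is a normalized tight frame. -/
def IsNormalizedTightFrame {H : Type*} [NormedAddCommGroup H] [InnerProductSpace ℂ H]
    {ι : Type*} (v : ι → H) : Prop :=
  ∀ f : H, ∑' i, ‖⟪v i, f⟫_ℂ‖ ^ 2 = ‖f‖ ^ 2

/-- `P` is the orthogonal projection onto the set `S`: idempotent, self-adjoint,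
with range `S`. -/
def IsOrthProjectionOnto {H : Type*} [NormedAddCommGroup H] [InnerProductSpace ℂ H]
    (P : H →L[ℂ] H) (S : Set H) : Prop :=
  (∀ v, P (P v) = P v) ∧ (∀ v w : H, ⟪P v, w⟫_ℂ = ⟪v, P w⟫_ℂ) ∧ Set.range P = S

/-- The two covariance relations for a Gabor-type kernel on `ℤ²`. -/
def GaborCovariant (lam : ℂ) (K : ℤ × ℤ → ℤ × ℤ → ℂ) : Prop :=
  (∀ m n m' n' : ℤ, K (m + 1, n) (m' + 1, n') = K (m, n) (m', n')) ∧
  (∀ m n m' n' : ℤ, K (m, n + 1) (m', n' + 1) = lam ^ (m - m') * K (m, n) (m', n'))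

/-- The vectors `U^m V^n ξ₀` of a Gabor type unitary system. -/
def gaborVec {H : Type*} [NormedAddCommGroup H] [InnerProductSpace ℂ H] [CompleteSpace H]
    (U V : unitary (H →L[ℂ] H)) (ξ₀ : H) (p : ℤ × ℤ) : H :=
  ((U ^ p.1 * V ^ p.2 : unitary (H →L[ℂ] H)) : H →L[ℂ] H) ξ₀

/-- `(H, U, V, ξ₀)` is the Gabor type cyclic system associated to the kernel `K` and the
unimodular scalar `lam` : `U V = lam V U`, the vectors `U^m V^n ξ₀` span a dense subspace,
and their inner products reproduce `K`. -/
def IsGaborSystem {H : Type*} [NormedAddCommGroup H] [InnerProductSpace ℂ H] [CompleteSpace H]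
    (lam : ℂ) (K : ℤ × ℤ → ℤ × ℤ → ℂ) (U V : unitary (H →L[ℂ] H)) (ξ₀ : H) : Prop :=
  ((U : H →L[ℂ] H) * (V : H →L[ℂ] H) = lam • ((V : H →L[ℂ] H) * (U : H →L[ℂ] H))) ∧
  Dense (↑(Submodule.span ℂ (Set.range (gaborVec U V ξ₀))) : Set H) ∧
  ∀ m n m' n' : ℤ,
    ⟪gaborVec U V ξ₀ (m', n'), gaborVec U V ξ₀ (m, n)⟫_ℂ = K (m, n) (m', n')


namespace GaborAux

variable {H : Type*} [NormedAddCommGroup H] [InnerProductSpace ℂ H]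

lemma sep {ι : Type*} (g : ι → H) (hd : Dense (↑(Submodule.span ℂ (Set.range g)) : Set H))
    {w w' : H} (h : ∀ q, ⟪g q, w⟫_ℂ = ⟪g q, w'⟫_ℂ) : w = w' := by
  refine Dense.eq_of_inner_right ℂ hd (fun v hv' => ?_)
  have hv : v ∈ Submodule.span ℂ (Set.range g) := hv'
  clear hv'
  induction hv using Submodule.span_induction with
  | mem x hx => obtain ⟨q, rfl⟩ := hx; exact h q
  | zero => simp
  | add x y _ _ hx hy => simp only [inner_add_left, hx, hy]
  | smul a x _ hx => simp only [inner_smul_left, hx]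

lemma norm_le_of_dense {ι : Type*} (g : ι → H)
    (hd : Dense (↑(Submodule.span ℂ (Set.range g)) : Set H)) (w : H) (M : ℝ) (hM : 0 ≤ M)
    (h : ∀ v ∈ Submodule.span ℂ (Set.range g), ‖⟪v, w⟫_ℂ‖ ≤ M * ‖v‖) : ‖w‖ ≤ M := by
  rcases eq_or_lt_of_le (norm_nonneg w) with h0 | h0
  · rw [← h0]; exact hM
  obtain ⟨u, hu, hlim⟩ := mem_closure_iff_seq_limit.1 (hd w)
  have hlim1 : Filter.Tendsto (fun n => ‖⟪u n, w⟫_ℂ‖) Filter.atTop (nhds ‖⟪w, w⟫_ℂ‖) :=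
    (Filter.Tendsto.inner hlim tendsto_const_nhds).norm
  have hlim2 : Filter.Tendsto (fun n => M * ‖u n‖) Filter.atTop (nhds (M * ‖w‖)) :=
    (hlim.norm).const_mul M
  have hle : ‖⟪w, w⟫_ℂ‖ ≤ M * ‖w‖ :=
    le_of_tendsto_of_tendsto' hlim1 hlim2 (fun n => h (u n) (hu n))
  have hww : ‖⟪w, w⟫_ℂ‖ = ‖w‖ * ‖w‖ := by
    rw [inner_self_eq_norm_sq_to_K]
    simp [norm_pow, sq]
  rw [hww] at hle
  exact le_of_mul_le_mul_right hle h0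

lemma inner_comb {ι κ : Type*} {s : Finset κ} {t : Finset ι} (a : ι → H) (b : κ → H)
    (ξ : ι → ℂ) (η : κ → ℂ) :
    ⟪∑ q ∈ s, η q • b q, ∑ p ∈ t, ξ p • a p⟫_ℂ =
      ∑ p ∈ t, ∑ q ∈ s, ⟪b q, a p⟫_ℂ * ξ p * (starRingEnd ℂ) (η q) := by
  rw [sum_inner]
  rw [Finset.sum_comm]
  refine Finset.sum_congr rfl (fun p _ => ?_)
  rw [inner_sum]
  refine Finset.sum_congr rfl (fun q _ => ?_)
  rw [inner_smul_left, inner_smul_right]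
  ring

lemma sum_fin {α M : Type*} [AddCommMonoid M] (s : Finset α) (F : α → M) :
    ∑ i : Fin s.card, F (s.equivFin.symm i) = ∑ p ∈ s, F p := by
  rw [← Finset.sum_coe_sort s F]
  exact Equiv.sum_comp s.equivFin.symm (fun x => F x)

lemma genext {ι : Type*} [CompleteSpace H] (g : ι → H)
    (hd : Dense (↑(Submodule.span ℂ (Set.range g)) : Set H))
    {W : Type*} [NormedAddCommGroup W] [NormedSpace ℂ W] [CompleteSpace W]
    (T : (ι →₀ ℂ) →ₗ[ℂ] W) (C : ℝ) (hC : 0 ≤ C)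
    (hb : ∀ ξ, ‖T ξ‖ ≤ C * ‖Finsupp.linearCombination ℂ g ξ‖) :
    ∃ S : H →L[ℂ] W, ‖S‖ ≤ C ∧ ∀ ξ, S (Finsupp.linearCombination ℂ g ξ) = T ξ := by
  set ℓ := Finsupp.linearCombination ℂ g with hℓ
  have hker : LinearMap.ker ℓ ≤ LinearMap.ker T := by
    intro ξ hξ
    rw [LinearMap.mem_ker] at hξ ⊢
    have := hb ξ
    rw [show Finsupp.linearCombination ℂ g ξ = ℓ ξ from rfl, hξ, norm_zero, mul_zero] at this
    exact norm_le_zero_iff.1 this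
  set S₀ : LinearMap.range ℓ →ₗ[ℂ] W :=
    ((LinearMap.ker ℓ).liftQ T hker).comp ℓ.quotKerEquivRange.symm.toLinearMap with hS₀
  have hS₀eq : ∀ ξ : ι →₀ ℂ, ∀ hm : ℓ ξ ∈ LinearMap.range ℓ, S₀ ⟨ℓ ξ, hm⟩ = T ξ := by
    intro ξ hm
    rw [hS₀]
    simp only [LinearMap.comp_apply, LinearEquiv.coe_toLinearMap]
    rw [LinearMap.quotKerEquivRange_symm_apply_image ℓ ξ hm]
    rfl
  have hS₀b : ∀ v : LinearMap.range ℓ, ‖S₀ v‖ ≤ C * ‖v‖ := by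
    rintro ⟨v, ξ, rfl⟩
    rw [hS₀eq ξ (LinearMap.mem_range_self ℓ ξ)]
    exact (hb ξ)
  set S₁ : LinearMap.range ℓ →L[ℂ] W := S₀.mkContinuous C hS₀b with hS₁
  set e : LinearMap.range ℓ →L[ℂ] H := (LinearMap.range ℓ).subtypeL with he
  have hee : ∀ x, ‖x‖ ≤ ((1 : NNReal) : ℝ) * ‖e x‖ := by intro x; simp [he]
  have hde : DenseRange e := by
    have : Set.range e = (LinearMap.range ℓ : Set H) := Subtype.range_coe
    rw [DenseRange, this, hℓ, Finsupp.range_linearCombination]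
    exact hd
  refine ⟨S₁.extend e, ?_, ?_⟩
  · calc ‖S₁.extend e‖
        ≤ ((1 : NNReal) : ℝ) * ‖S₁‖ := ContinuousLinearMap.opNorm_extend_le S₁ hde hee
      _ ≤ C := by rw [NNReal.coe_one, one_mul]; exact S₀.mkContinuous_norm_le hC hS₀b
  · intro ξ
    have : ℓ ξ = e ⟨ℓ ξ, LinearMap.mem_range_self ℓ ξ⟩ := rfl
    rw [this, ContinuousLinearMap.extend_eq S₁ hde (e.isUniformEmbedding_of_bound hee).isUniformInducing]
    show S₀ _ = T ξ
    exact hS₀eq ξ _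

end GaborAux
namespace GaborAux2

open GaborAux

variable {H : Type*} [NormedAddCommGroup H] [InnerProductSpace ℂ H] [CompleteSpace H]
variable {lam : ℂ}
variable (U V : unitary (H →L[ℂ] H))

lemma coe_mul (A B : unitary (H →L[ℂ] H)) :
    ((A * B : unitary (H →L[ℂ] H)) : H →L[ℂ] H) = (A : H →L[ℂ] H) * (B : H →L[ℂ] H) := rfl

lemma coe_one : (((1 : unitary (H →L[ℂ] H))) : H →L[ℂ] H) = 1 := rfl

lemma iu_mul_u : ((U⁻¹ : unitary (H →L[ℂ] H)) : H →L[ℂ] H) * (U : H →L[ℂ] H) = 1 := by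
  rw [← coe_mul, inv_mul_cancel, coe_one]

lemma u_mul_iu : (U : H →L[ℂ] H) * ((U⁻¹ : unitary (H →L[ℂ] H)) : H →L[ℂ] H) = 1 := by
  rw [← coe_mul, mul_inv_cancel, coe_one]

section comm
variable (hlam0 : lam ≠ 0)
variable (hcomm : (U : H →L[ℂ] H) * (V : H →L[ℂ] H) =
  lam • ((V : H →L[ℂ] H) * (U : H →L[ℂ] H)))

include hcomm hlam0

lemma vu_rel : (V : H →L[ℂ] H) * (U : H →L[ℂ] H) =
    lam⁻¹ • ((U : H →L[ℂ] H) * (V : H →L[ℂ] H)) := by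
  rw [hcomm, smul_smul, inv_mul_cancel₀ hlam0, one_smul]

lemma v_iu_rel : (V : H →L[ℂ] H) * ((U⁻¹ : unitary (H →L[ℂ] H)) : H →L[ℂ] H) =
    lam • (((U⁻¹ : unitary (H →L[ℂ] H)) : H →L[ℂ] H) * (V : H →L[ℂ] H)) := by
  have h1 : (V : H →L[ℂ] H) =
      lam • (((U⁻¹ : unitary (H →L[ℂ] H)) : H →L[ℂ] H) *
        ((V : H →L[ℂ] H) * (U : H →L[ℂ] H))) := by
    have h0 : ((U⁻¹ : unitary (H →L[ℂ] H)) : H →L[ℂ] H) *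
        ((U : H →L[ℂ] H) * (V : H →L[ℂ] H)) =
        lam • (((U⁻¹ : unitary (H →L[ℂ] H)) : H →L[ℂ] H) *
          ((V : H →L[ℂ] H) * (U : H →L[ℂ] H))) := by
      rw [hcomm, mul_smul_comm]
    rwa [← mul_assoc, iu_mul_u U, one_mul] at h0
  calc (V : H →L[ℂ] H) * ((U⁻¹ : unitary (H →L[ℂ] H)) : H →L[ℂ] H)
      = (lam • (((U⁻¹ : unitary (H →L[ℂ] H)) : H →L[ℂ] H) *
          ((V : H →L[ℂ] H) * (U : H →L[ℂ] H)))) *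
          ((U⁻¹ : unitary (H →L[ℂ] H)) : H →L[ℂ] H) := by rw [← h1]
    _ = lam • (((U⁻¹ : unitary (H →L[ℂ] H)) : H →L[ℂ] H) * ((V : H →L[ℂ] H) *
          ((U : H →L[ℂ] H) * ((U⁻¹ : unitary (H →L[ℂ] H)) : H →L[ℂ] H)))) := by
        rw [smul_mul_assoc, mul_assoc, mul_assoc]
    _ = lam • (((U⁻¹ : unitary (H →L[ℂ] H)) : H →L[ℂ] H) * (V : H →L[ℂ] H)) := by
        rw [u_mul_iu U, mul_one]

lemma comm_zpow : ∀ m : ℤ, (V : H →L[ℂ] H) * ((U ^ m : unitary (H →L[ℂ] H)) : H →L[ℂ] H) =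
    lam ^ (-m) • (((U ^ m : unitary (H →L[ℂ] H)) : H →L[ℂ] H) * (V : H →L[ℂ] H)) := by
  intro m
  induction m using Int.induction_on with
  | zero => rw [zpow_zero, coe_one, neg_zero, zpow_zero, one_smul, mul_one, one_mul]
  | succ k ih =>
    have hU : (U : unitary (H →L[ℂ] H)) ^ ((k : ℤ) + 1) = U ^ (k : ℤ) * U := zpow_add_one U k
    rw [hU, coe_mul, ← mul_assoc, ih, smul_mul_assoc, mul_assoc, vu_rel U V hlam0 hcomm,
      mul_smul_comm, smul_smul, ← mul_assoc, ← coe_mul, ← hU]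
    congr 1
    rw [show (-((k:ℤ)+1)) = -(k:ℤ) + (-1) by ring, zpow_add₀ hlam0, zpow_neg_one]
  | pred k ih =>
    have hU : (U : unitary (H →L[ℂ] H)) ^ (-(k : ℤ) - 1) = U ^ (-(k : ℤ)) * U⁻¹ := by
      rw [zpow_sub_one]
    rw [hU, coe_mul, ← mul_assoc, ih, smul_mul_assoc, mul_assoc,
      v_iu_rel U V hlam0 hcomm, mul_smul_comm, smul_smul, ← mul_assoc, ← coe_mul, ← hU]
    congr 1
    rw [show (-(-(k:ℤ) - 1)) = (- -(k:ℤ)) + 1 by ring, zpow_add₀ hlam0, zpow_one]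

lemma iv_comm_zpow (m : ℤ) : ((V⁻¹ : unitary (H →L[ℂ] H)) : H →L[ℂ] H) *
      ((U ^ m : unitary (H →L[ℂ] H)) : H →L[ℂ] H) =
    lam ^ m • (((U ^ m : unitary (H →L[ℂ] H)) : H →L[ℂ] H) *
      ((V⁻¹ : unitary (H →L[ℂ] H)) : H →L[ℂ] H)) := by
  have h2 := comm_zpow U V hlam0 hcomm m
  have h1 : ((U ^ m : unitary (H →L[ℂ] H)) : H →L[ℂ] H) *
      ((V⁻¹ : unitary (H →L[ℂ] H)) : H →L[ℂ] H) =
      lam ^ (-m) • (((V⁻¹ : unitary (H →L[ℂ] H)) : H →L[ℂ] H) *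
        ((U ^ m : unitary (H →L[ℂ] H)) : H →L[ℂ] H)) := by
    calc ((U ^ m : unitary (H →L[ℂ] H)) : H →L[ℂ] H) *
          ((V⁻¹ : unitary (H →L[ℂ] H)) : H →L[ℂ] H)
        = ((V⁻¹ : unitary (H →L[ℂ] H)) : H →L[ℂ] H) * ((V : H →L[ℂ] H) *
            ((U ^ m : unitary (H →L[ℂ] H)) : H →L[ℂ] H)) *
            ((V⁻¹ : unitary (H →L[ℂ] H)) : H →L[ℂ] H) := by
          rw [← mul_assoc, iu_mul_u V, one_mul]
      _ = ((V⁻¹ : unitary (H →L[ℂ] H)) : H →L[ℂ] H) *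
            (lam ^ (-m) • (((U ^ m : unitary (H →L[ℂ] H)) : H →L[ℂ] H) * (V : H →L[ℂ] H))) *
            ((V⁻¹ : unitary (H →L[ℂ] H)) : H →L[ℂ] H) := by rw [h2]
      _ = lam ^ (-m) • (((V⁻¹ : unitary (H →L[ℂ] H)) : H →L[ℂ] H) *
            ((U ^ m : unitary (H →L[ℂ] H)) : H →L[ℂ] H) * ((V : H →L[ℂ] H) *
            ((V⁻¹ : unitary (H →L[ℂ] H)) : H →L[ℂ] H))) := by
          rw [mul_smul_comm, smul_mul_assoc, mul_assoc, mul_assoc, mul_assoc]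
      _ = lam ^ (-m) • (((V⁻¹ : unitary (H →L[ℂ] H)) : H →L[ℂ] H) *
            ((U ^ m : unitary (H →L[ℂ] H)) : H →L[ℂ] H)) := by
          rw [u_mul_iu V, mul_one]
  rw [h1, smul_smul, ← zpow_add₀ hlam0, add_neg_cancel, zpow_zero, one_smul]

end comm

end GaborAux2
set_option linter.unusedSectionVars false

namespace GaborAux3

open GaborAux GaborAux2

variable {H : Type*} [NormedAddCommGroup H] [InnerProductSpace ℂ H] [CompleteSpace H]
variable {lam : ℂ}
variable (U V : unitary (H →L[ℂ] H)) (ξ₀ : H)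

lemma gvec_def (p : ℤ × ℤ) : gaborVec U V ξ₀ p =
    (((U ^ p.1 : unitary (H →L[ℂ] H)) : H →L[ℂ] H) *
      ((V ^ p.2 : unitary (H →L[ℂ] H)) : H →L[ℂ] H)) ξ₀ := rfl

/-- U acting on a Gabor vector. -/
lemma gvec_U (m n : ℤ) :
    (U : H →L[ℂ] H) (gaborVec U V ξ₀ (m, n)) = gaborVec U V ξ₀ (m + 1, n) := by
  have hU : (U : unitary (H →L[ℂ] H)) ^ (m + 1) = U * U ^ m := by
    rw [add_comm, zpow_one_add]
  rw [gvec_def U V ξ₀ (m + 1, n), gvec_def U V ξ₀ (m, n)]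
  simp only [hU, coe_mul, mul_assoc]
  rfl

/-- U⁻¹ acting on a Gabor vector. -/
lemma gvec_U_inv (m n : ℤ) :
    ((U⁻¹ : unitary (H →L[ℂ] H)) : H →L[ℂ] H) (gaborVec U V ξ₀ (m, n)) =
      gaborVec U V ξ₀ (m - 1, n) := by
  have hU : (U : unitary (H →L[ℂ] H)) ^ (m - 1) = U⁻¹ * U ^ m := by
    rw [show m - 1 = -1 + m by ring, zpow_add, zpow_neg_one]
  rw [gvec_def U V ξ₀ (m - 1, n), gvec_def U V ξ₀ (m, n)]
  simp only [hU, coe_mul, mul_assoc]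
  rfl

section comm
variable (hlam0 : lam ≠ 0)
variable (hcomm : (U : H →L[ℂ] H) * (V : H →L[ℂ] H) =
  lam • ((V : H →L[ℂ] H) * (U : H →L[ℂ] H)))

include hcomm hlam0

/-- V acting on a Gabor vector. -/
lemma gvec_V (m n : ℤ) :
    (V : H →L[ℂ] H) (gaborVec U V ξ₀ (m, n)) = lam ^ (-m) • gaborVec U V ξ₀ (m, n + 1) := by
  have hV : (V : unitary (H →L[ℂ] H)) ^ (n + 1) = V * V ^ n := by
    rw [add_comm, zpow_one_add]
  have key : (V : H →L[ℂ] H) * (((U ^ m : unitary (H →L[ℂ] H)) : H →L[ℂ] H) *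
      ((V ^ n : unitary (H →L[ℂ] H)) : H →L[ℂ] H)) =
      lam ^ (-m) • (((U ^ m : unitary (H →L[ℂ] H)) : H →L[ℂ] H) *
        ((V ^ (n + 1) : unitary (H →L[ℂ] H)) : H →L[ℂ] H)) := by
    rw [← mul_assoc, comm_zpow U V hlam0 hcomm m, smul_mul_assoc, mul_assoc, hV, coe_mul]
  rw [gvec_def U V ξ₀ (m, n), gvec_def U V ξ₀ (m, n + 1)]
  calc (V : H →L[ℂ] H) ((((U ^ m : unitary (H →L[ℂ] H)) : H →L[ℂ] H) *
        ((V ^ n : unitary (H →L[ℂ] H)) : H →L[ℂ] H)) ξ₀)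
      = ((V : H →L[ℂ] H) * (((U ^ m : unitary (H →L[ℂ] H)) : H →L[ℂ] H) *
        ((V ^ n : unitary (H →L[ℂ] H)) : H →L[ℂ] H))) ξ₀ := rfl
    _ = (lam ^ (-m) • (((U ^ m : unitary (H →L[ℂ] H)) : H →L[ℂ] H) *
        ((V ^ (n + 1) : unitary (H →L[ℂ] H)) : H →L[ℂ] H))) ξ₀ := by rw [key]
    _ = lam ^ (-m) • ((((U ^ m : unitary (H →L[ℂ] H)) : H →L[ℂ] H) *
        ((V ^ (n + 1) : unitary (H →L[ℂ] H)) : H →L[ℂ] H)) ξ₀) := rfl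

/-- V⁻¹ acting on a Gabor vector. -/
lemma gvec_V_inv (m n : ℤ) :
    ((V⁻¹ : unitary (H →L[ℂ] H)) : H →L[ℂ] H) (gaborVec U V ξ₀ (m, n)) =
      lam ^ m • gaborVec U V ξ₀ (m, n - 1) := by
  have hV : (V : unitary (H →L[ℂ] H)) ^ (n - 1) = V⁻¹ * V ^ n := by
    rw [show n - 1 = -1 + n by ring, zpow_add, zpow_neg_one]
  have key : ((V⁻¹ : unitary (H →L[ℂ] H)) : H →L[ℂ] H) *
      (((U ^ m : unitary (H →L[ℂ] H)) : H →L[ℂ] H) *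
      ((V ^ n : unitary (H →L[ℂ] H)) : H →L[ℂ] H)) =
      lam ^ m • (((U ^ m : unitary (H →L[ℂ] H)) : H →L[ℂ] H) *
        ((V ^ (n - 1) : unitary (H →L[ℂ] H)) : H →L[ℂ] H)) := by
    rw [← mul_assoc, iv_comm_zpow U V hlam0 hcomm m, smul_mul_assoc, mul_assoc, hV, coe_mul]
  rw [gvec_def U V ξ₀ (m, n), gvec_def U V ξ₀ (m, n - 1)]
  calc ((V⁻¹ : unitary (H →L[ℂ] H)) : H →L[ℂ] H) ((((U ^ m : unitary (H →L[ℂ] H)) : H →L[ℂ] H) *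
        ((V ^ n : unitary (H →L[ℂ] H)) : H →L[ℂ] H)) ξ₀)
      = (((V⁻¹ : unitary (H →L[ℂ] H)) : H →L[ℂ] H) * (((U ^ m : unitary (H →L[ℂ] H)) : H →L[ℂ] H) *
        ((V ^ n : unitary (H →L[ℂ] H)) : H →L[ℂ] H))) ξ₀ := rfl
    _ = (lam ^ m • (((U ^ m : unitary (H →L[ℂ] H)) : H →L[ℂ] H) *
        ((V ^ (n - 1) : unitary (H →L[ℂ] H)) : H →L[ℂ] H))) ξ₀ := by rw [key]
    _ = lam ^ m • ((((U ^ m : unitary (H →L[ℂ] H)) : H →L[ℂ] H) *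
        ((V ^ (n - 1) : unitary (H →L[ℂ] H)) : H →L[ℂ] H)) ξ₀) := rfl

end comm

/-- Unitaries move across the inner product as inverses. -/
lemma inner_unitary_left (W : unitary (H →L[ℂ] H)) (a b : H) :
    ⟪(W : H →L[ℂ] H) a, b⟫_ℂ = ⟪a, ((W⁻¹ : unitary (H →L[ℂ] H)) : H →L[ℂ] H) b⟫_ℂ := by
  have h : ((W⁻¹ : unitary (H →L[ℂ] H)) : H →L[ℂ] H) =
      ContinuousLinearMap.adjoint (W : H →L[ℂ] H) := by
    rw [← ContinuousLinearMap.star_eq_adjoint, ← Unitary.coe_star, Unitary.star_eq_inv]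
  rw [h, ContinuousLinearMap.adjoint_inner_right]

lemma inner_unitary_right (W : unitary (H →L[ℂ] H)) (a b : H) :
    ⟪a, (W : H →L[ℂ] H) b⟫_ℂ = ⟪((W⁻¹ : unitary (H →L[ℂ] H)) : H →L[ℂ] H) a, b⟫_ℂ := by
  have h : ((W⁻¹ : unitary (H →L[ℂ] H)) : H →L[ℂ] H) =
      ContinuousLinearMap.adjoint (W : H →L[ℂ] H) := by
    rw [← ContinuousLinearMap.star_eq_adjoint, ← Unitary.coe_star, Unitary.star_eq_inv]
  rw [h, ContinuousLinearMap.adjoint_inner_left]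

lemma inner_unitary_both (W : unitary (H →L[ℂ] H)) (a b : H) :
    ⟪(W : H →L[ℂ] H) a, (W : H →L[ℂ] H) b⟫_ℂ = ⟪a, b⟫_ℂ := by
  rw [inner_unitary_left]
  congr 1
  calc ((W⁻¹ : unitary (H →L[ℂ] H)) : H →L[ℂ] H) ((W : H →L[ℂ] H) b)
      = (((W⁻¹ : unitary (H →L[ℂ] H)) : H →L[ℂ] H) * (W : H →L[ℂ] H)) b := rfl
    _ = b := by rw [iu_mul_u W]; rfl

end GaborAux3
namespace GaborAux4

open GaborAux GaborAux2 GaborAux3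

variable {H : Type*} [NormedAddCommGroup H] [InnerProductSpace ℂ H]

lemma inner_lincomb {ι κ : Type*} (a : ι → H) (b : κ → H) (B : ι → κ → ℂ)
    (hB : ∀ p q, ⟪b q, a p⟫_ℂ = B p q) (ξ : ι →₀ ℂ) (η : κ →₀ ℂ) :
    ⟪Finsupp.linearCombination ℂ b η, Finsupp.linearCombination ℂ a ξ⟫_ℂ =
      ∑ p ∈ ξ.support, ∑ q ∈ η.support, B p q * ξ p * (starRingEnd ℂ) (η q) := by
  rw [Finsupp.linearCombination_apply, Finsupp.linearCombination_apply,
    Finsupp.sum, Finsupp.sum, inner_comb]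
  exact Finset.sum_congr rfl fun p _ => Finset.sum_congr rfl fun q _ => by rw [hB]

lemma finsupp_form {α : Type*} (B : α → α → ℂ) (ξ η : α →₀ ℂ) :
    ∑ i : Fin ξ.support.card, ∑ j : Fin η.support.card,
      B (ξ.support.equivFin.symm i) (η.support.equivFin.symm j) *
        ξ (ξ.support.equivFin.symm i) * (starRingEnd ℂ) (η (η.support.equivFin.symm j)) =
    ∑ p ∈ ξ.support, ∑ q ∈ η.support, B p q * ξ p * (starRingEnd ℂ) (η q) := by
  rw [sum_fin ξ.support (fun p => ∑ j : Fin η.support.card,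
    B p (η.support.equivFin.symm j) * ξ p * (starRingEnd ℂ) (η (η.support.equivFin.symm j)))]
  exact Finset.sum_congr rfl fun p _ =>
    sum_fin η.support (fun q => B p q * ξ p * (starRingEnd ℂ) (η q))

lemma re_inner_self (w : H) : (⟪w, w⟫_ℂ).re = ‖w‖ ^ 2 := by
  rw [inner_self_eq_norm_sq_to_K]
  simp [← Complex.ofReal_pow]

end GaborAux4

open GaborAux GaborAux2 GaborAux3 GaborAux4

/-- Intertwining operators between the Gabor type cyclic systems associated to two
covariant positive definite kernels on `ℤ²` correspond to covariant bikernels `L` with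
`L² ≤ c K K'`. -/
theorem gabor_intertwiner (lam : ℂ) (hlam : ‖lam‖ = 1)
    (K K' : ℤ × ℤ → ℤ × ℤ → ℂ) (hK : IsPosDefKernel K) (hK' : IsPosDefKernel K')
    (hKcov : GaborCovariant lam K) (hK'cov : GaborCovariant lam K')
    {H : Type*} [NormedAddCommGroup H] [InnerProductSpace ℂ H] [CompleteSpace H]
    {H' : Type*} [NormedAddCommGroup H'] [InnerProductSpace ℂ H'] [CompleteSpace H']
    (U V : unitary (H →L[ℂ] H)) (ξ₀ : H) (U' V' : unitary (H' →L[ℂ] H')) (ξ₀' : H')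
    (hsys : IsGaborSystem lam K U V ξ₀) (hsys' : IsGaborSystem lam K' U' V' ξ₀') :
    (∀ (L : ℤ × ℤ → ℤ × ℤ → ℂ) (c : ℝ), 0 < c → KernelSqLE L K K' c →
      GaborCovariant lam L →
      (∃! S : H →L[ℂ] H',
        S.comp (U : H →L[ℂ] H) = (U' : H' →L[ℂ] H').comp S ∧
        S.comp (V : H →L[ℂ] H) = (V' : H' →L[ℂ] H').comp S ∧
        ∀ m n m' n' : ℤ,
          ⟪gaborVec U' V' ξ₀' (m', n'), S (gaborVec U V ξ₀ (m, n))⟫_ℂ = L (m, n) (m', n')) ∧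
      (∀ S : H →L[ℂ] H',
        (S.comp (U : H →L[ℂ] H) = (U' : H' →L[ℂ] H').comp S ∧
         S.comp (V : H →L[ℂ] H) = (V' : H' →L[ℂ] H').comp S ∧
         ∀ m n m' n' : ℤ,
           ⟪gaborVec U' V' ξ₀' (m', n'), S (gaborVec U V ξ₀ (m, n))⟫_ℂ = L (m, n) (m', n')) →
        ‖S‖ ≤ Real.sqrt c)) ∧
    (∀ S : H →L[ℂ] H',
      S.comp (U : H →L[ℂ] H) = (U' : H' →L[ℂ] H').comp S →
      S.comp (V : H →L[ℂ] H) = (V' : H' →L[ℂ] H').comp S →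
      (∃! L : ℤ × ℤ → ℤ × ℤ → ℂ, ∀ m n m' n' : ℤ,
        ⟪gaborVec U' V' ξ₀' (m', n'), S (gaborVec U V ξ₀ (m, n))⟫_ℂ = L (m, n) (m', n')) ∧
      (∀ L : ℤ × ℤ → ℤ × ℤ → ℂ,
        (∀ m n m' n' : ℤ,
          ⟪gaborVec U' V' ξ₀' (m', n'), S (gaborVec U V ξ₀ (m, n))⟫_ℂ = L (m, n) (m', n')) →
        GaborCovariant lam L ∧ KernelSqLE L K K' (‖S‖ ^ 2))) := by
  obtain ⟨hcomm, hdense, hkin⟩ := hsys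
  obtain ⟨hcomm', hdense', hkin'⟩ := hsys'
  have hlam0 : lam ≠ 0 := by
    intro h; rw [h] at hlam; simp at hlam
  have hconj : (starRingEnd ℂ) lam = lam⁻¹ := by
    have h1 : lam * (starRingEnd ℂ) lam = 1 := by
      rw [Complex.mul_conj]
      norm_cast
      rw [← Complex.sq_norm, hlam, one_pow]
    field_simp [hlam0] at h1 ⊢
    linear_combination h1
  have hconjz : ∀ k : ℤ, (starRingEnd ℂ) (lam ^ k) = lam ^ (-k) := by
    intro k
    rw [map_zpow₀, hconj, ← zpow_neg_one, ← zpow_mul, neg_one_mul]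
  set g : ℤ × ℤ → H := gaborVec U V ξ₀ with hg
  set g' : ℤ × ℤ → H' := gaborVec U' V' ξ₀' with hg'
  have hk : ∀ p q : ℤ × ℤ, ⟪g q, g p⟫_ℂ = K p q := fun p q => hkin p.1 p.2 q.1 q.2
  have hk' : ∀ p q : ℤ × ℤ, ⟪g' q, g' p⟫_ℂ = K' p q := fun p q => hkin' p.1 p.2 q.1 q.2
  have hUapp : ∀ p : ℤ × ℤ, (U : H →L[ℂ] H) (g p) = g (p.1 + 1, p.2) :=
    fun p => gvec_U U V ξ₀ p.1 p.2
  have hU'app : ∀ p : ℤ × ℤ, (U' : H' →L[ℂ] H') (g' p) = g' (p.1 + 1, p.2) :=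
    fun p => gvec_U U' V' ξ₀' p.1 p.2
  have hU'inv : ∀ p : ℤ × ℤ, ((U'⁻¹ : unitary (H' →L[ℂ] H')) : H' →L[ℂ] H') (g' p) =
      g' (p.1 - 1, p.2) := fun p => gvec_U_inv U' V' ξ₀' p.1 p.2
  have hVapp : ∀ p : ℤ × ℤ, (V : H →L[ℂ] H) (g p) = lam ^ (-p.1) • g (p.1, p.2 + 1) :=
    fun p => gvec_V U V ξ₀ hlam0 hcomm p.1 p.2
  have hV'app : ∀ p : ℤ × ℤ, (V' : H' →L[ℂ] H') (g' p) = lam ^ (-p.1) • g' (p.1, p.2 + 1) :=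
    fun p => gvec_V U' V' ξ₀' hlam0 hcomm' p.1 p.2
  have hV'inv : ∀ p : ℤ × ℤ, ((V'⁻¹ : unitary (H' →L[ℂ] H')) : H' →L[ℂ] H') (g' p) =
      lam ^ p.1 • g' (p.1, p.2 - 1) := fun p => gvec_V_inv U' V' ξ₀' hlam0 hcomm' p.1 p.2
  constructor
  · -- Part 1: from kernels to operators
    intro L c hc hsq hLcov
    set ℓ : ((ℤ × ℤ) →₀ ℂ) →ₗ[ℂ] H := Finsupp.linearCombination ℂ g with hℓ
    set ℓ' : ((ℤ × ℤ) →₀ ℂ) →ₗ[ℂ] H' := Finsupp.linearCombination ℂ g' with hℓ'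
    have key : ∀ ξ η : (ℤ × ℤ) →₀ ℂ,
        ‖∑ p ∈ ξ.support, ∑ q ∈ η.support, L p q * ξ p * (starRingEnd ℂ) (η q)‖ ≤
          Real.sqrt c * ‖ℓ ξ‖ * ‖ℓ' η‖ := by
      intro ξ η
      have h2 := hsq ξ.support.card η.support.card
        (fun i => (ξ.support.equivFin.symm i : ℤ × ℤ))
        (fun j => (η.support.equivFin.symm j : ℤ × ℤ))
        (fun i => ξ (ξ.support.equivFin.symm i)) (fun j => η (η.support.equivFin.symm j))
      rw [finsupp_form L ξ η, finsupp_form K ξ ξ, finsupp_form K' η η] at h2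
      have hKξ : (∑ p ∈ ξ.support, ∑ q ∈ ξ.support,
          K p q * ξ p * (starRingEnd ℂ) (ξ q)).re = ‖ℓ ξ‖ ^ 2 := by
        rw [← inner_lincomb g g K hk ξ ξ]
        exact re_inner_self _
      have hK'η : (∑ p ∈ η.support, ∑ q ∈ η.support,
          K' p q * η p * (starRingEnd ℂ) (η q)).re = ‖ℓ' η‖ ^ 2 := by
        rw [← inner_lincomb g' g' K' hk' η η]
        exact re_inner_self _
      rw [hKξ, hK'η] at h2
      have hnn : (0:ℝ) ≤ Real.sqrt c * ‖ℓ ξ‖ * ‖ℓ' η‖ := by positivity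
      have hsq2 : ‖∑ p ∈ ξ.support, ∑ q ∈ η.support,
          L p q * ξ p * (starRingEnd ℂ) (η q)‖ ^ 2 ≤
          (Real.sqrt c * ‖ℓ ξ‖ * ‖ℓ' η‖) ^ 2 := by
        calc ‖∑ p ∈ ξ.support, ∑ q ∈ η.support,
            L p q * ξ p * (starRingEnd ℂ) (η q)‖ ^ 2
            ≤ c * ‖ℓ ξ‖ ^ 2 * ‖ℓ' η‖ ^ 2 := h2
          _ = (Real.sqrt c * ‖ℓ ξ‖ * ‖ℓ' η‖) ^ 2 := by
            rw [mul_pow, mul_pow, Real.sq_sqrt hc.le]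
      have h5 := Real.sqrt_le_sqrt hsq2
      rwa [Real.sqrt_sq (norm_nonneg _), Real.sqrt_sq hnn] at h5
    have hsingle : ∀ p : ℤ × ℤ, ℓ (Finsupp.single p 1) = g p := by
      intro p
      rw [hℓ, Finsupp.linearCombination_single, one_smul]
    have hsingle' : ∀ q : ℤ × ℤ, ℓ' (Finsupp.single q 1) = g' q := by
      intro q
      rw [hℓ', Finsupp.linearCombination_single, one_smul]
    have hζex : ∀ p : ℤ × ℤ, ∃ z : H', ∀ q, ⟪g' q, z⟫_ℂ = L p q := by
      intro p
      set T : ((ℤ × ℤ) →₀ ℂ) →ₗ[ℂ] ℂ :=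
        Finsupp.linearCombination ℂ (fun q => (starRingEnd ℂ) (L p q)) with hT
      have hTb : ∀ η, ‖T η‖ ≤ Real.sqrt c * ‖g p‖ * ‖ℓ' η‖ := by
        intro η
        have h1 := key (Finsupp.single p 1) η
        rw [hsingle p] at h1
        have h2 : ∑ p' ∈ (Finsupp.single p (1:ℂ)).support, ∑ q ∈ η.support,
            L p' q * (Finsupp.single p (1:ℂ)) p' * (starRingEnd ℂ) (η q) =
            ∑ q ∈ η.support, L p q * (starRingEnd ℂ) (η q) := by
          rw [Finsupp.support_single_ne_zero p one_ne_zero, Finset.sum_singleton]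
          exact Finset.sum_congr rfl fun q _ => by rw [Finsupp.single_eq_same, mul_one]
        rw [h2] at h1
        have h3 : ‖T η‖ = ‖∑ q ∈ η.support, L p q * (starRingEnd ℂ) (η q)‖ := by
          rw [← RCLike.norm_conj (T η)]
          congr 1
          rw [hT, Finsupp.linearCombination_apply, Finsupp.sum, map_sum]
          refine Finset.sum_congr rfl fun q _ => ?_
          rw [smul_eq_mul, map_mul, Complex.conj_conj]
          ring
        rw [h3]
        exact h1
      obtain ⟨f, hfnorm, hfap⟩ := genext g' hdense' T (Real.sqrt c * ‖g p‖)
        (by positivity) hTb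
      refine ⟨(InnerProductSpace.toDual ℂ H').symm f, fun q => ?_⟩
      rw [← inner_conj_symm, InnerProductSpace.toDual_symm_apply, ← hsingle' q,
        hfap (Finsupp.single q 1), hT, Finsupp.linearCombination_single, smul_eq_mul,
        one_mul, Complex.conj_conj]
    choose ζ hζap using hζex
    set T2 : ((ℤ × ℤ) →₀ ℂ) →ₗ[ℂ] H' := Finsupp.linearCombination ℂ ζ with hT2
    have hT2b : ∀ ξ, ‖T2 ξ‖ ≤ Real.sqrt c * ‖ℓ ξ‖ := by
      intro ξ
      refine norm_le_of_dense g' hdense' (T2 ξ) _ (by positivity) ?_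
      intro v hv
      rw [← Finsupp.range_linearCombination] at hv
      obtain ⟨η, rfl⟩ := hv
      have h1 : ⟪ℓ' η, T2 ξ⟫_ℂ =
          ∑ p ∈ ξ.support, ∑ q ∈ η.support, L p q * ξ p * (starRingEnd ℂ) (η q) :=
        inner_lincomb ζ g' L (fun p q => hζap p q) ξ η
      rw [h1]
      exact key ξ η
    obtain ⟨S, hSnorm, hSap⟩ := genext g hdense T2 (Real.sqrt c) (Real.sqrt_nonneg c) hT2b
    have hSg : ∀ p : ℤ × ℤ, S (g p) = ζ p := by
      intro p
      rw [← hsingle p, hSap (Finsupp.single p 1), hT2, Finsupp.linearCombination_single,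
        one_smul]
    have hSinner : ∀ p q : ℤ × ℤ, ⟪g' q, S (g p)⟫_ℂ = L p q := by
      intro p q
      rw [hSg p]
      exact hζap p q
    have hUS : S.comp (U : H →L[ℂ] H) = (U' : H' →L[ℂ] H').comp S := by
      refine ContinuousLinearMap.ext_on hdense ?_
      rintro _ ⟨p, rfl⟩
      refine sep g' hdense' (fun q => ?_)
      have lhs : ⟪g' q, (S.comp (U : H →L[ℂ] H)) (g p)⟫_ℂ = L (p.1 + 1, p.2) q := by
        rw [ContinuousLinearMap.comp_apply, hUapp p, hSinner (p.1 + 1, p.2) q]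
      have rhs : ⟪g' q, ((U' : H' →L[ℂ] H').comp S) (g p)⟫_ℂ = L p (q.1 - 1, q.2) := by
        rw [ContinuousLinearMap.comp_apply, inner_unitary_right U', hU'inv q,
          hSinner p (q.1 - 1, q.2)]
      have hc1 := hLcov.1 p.1 p.2 (q.1 - 1) q.2
      rw [show q.1 - 1 + 1 = q.1 by ring] at hc1
      simp only [Prod.mk.eta] at hc1
      rw [lhs, rhs, hc1]
    have hVS : S.comp (V : H →L[ℂ] H) = (V' : H' →L[ℂ] H').comp S := by
      refine ContinuousLinearMap.ext_on hdense ?_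
      rintro _ ⟨p, rfl⟩
      refine sep g' hdense' (fun q => ?_)
      have lhs : ⟪g' q, (S.comp (V : H →L[ℂ] H)) (g p)⟫_ℂ =
          lam ^ (-p.1) * L (p.1, p.2 + 1) q := by
        rw [ContinuousLinearMap.comp_apply, hVapp p, map_smul, inner_smul_right,
          hSinner (p.1, p.2 + 1) q]
      have rhs : ⟪g' q, ((V' : H' →L[ℂ] H').comp S) (g p)⟫_ℂ =
          lam ^ (-q.1) * L p (q.1, q.2 - 1) := by
        rw [ContinuousLinearMap.comp_apply, inner_unitary_right V', hV'inv q,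
          inner_smul_left, hSinner p (q.1, q.2 - 1), hconjz]
      have hc2 := hLcov.2 p.1 p.2 q.1 (q.2 - 1)
      rw [show q.2 - 1 + 1 = q.2 by ring] at hc2
      simp only [Prod.mk.eta] at hc2
      rw [lhs, rhs, hc2, ← mul_assoc, ← zpow_add₀ hlam0]
      ring_nf
    have huniq : ∀ S' : H →L[ℂ] H',
        (S'.comp (U : H →L[ℂ] H) = (U' : H' →L[ℂ] H').comp S' ∧
         S'.comp (V : H →L[ℂ] H) = (V' : H' →L[ℂ] H').comp S' ∧
         ∀ m n m' n' : ℤ,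
           ⟪gaborVec U' V' ξ₀' (m', n'), S' (gaborVec U V ξ₀ (m, n))⟫_ℂ =
             L (m, n) (m', n')) → S' = S := by
      rintro S' ⟨-, -, hin⟩
      refine ContinuousLinearMap.ext_on hdense ?_
      rintro _ ⟨p, rfl⟩
      refine sep g' hdense' (fun q => ?_)
      rw [hSinner p q]
      exact hin p.1 p.2 q.1 q.2
    refine ⟨⟨S, ⟨hUS, hVS, fun m n m' n' => hSinner (m, n) (m', n')⟩,
      fun S' h => huniq S' h⟩, ?_⟩
    intro S' h
    rw [huniq S' h]
    exact hSnorm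
  · -- Part 2: from operators to kernels
    intro S hUS hVS
    have hUS' : ∀ x, S ((U : H →L[ℂ] H) x) = (U' : H' →L[ℂ] H') (S x) := by
      intro x
      exact congrArg (fun T : H →L[ℂ] H' => T x) hUS
    have hVS' : ∀ x, S ((V : H →L[ℂ] H) x) = (V' : H' →L[ℂ] H') (S x) := by
      intro x
      exact congrArg (fun T : H →L[ℂ] H' => T x) hVS
    refine ⟨⟨fun p q => ⟪g' q, S (g p)⟫_ℂ, fun m n m' n' => rfl, ?_⟩, ?_⟩
    · -- uniqueness of L
      rintro L₀ hL₀
      funext p q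
      exact ((hL₀ p.1 p.2 q.1 q.2).symm : L₀ (p.1, p.2) (q.1, q.2) = _)
    intro L₀ hL₀
    have hL : ∀ p q : ℤ × ℤ, ⟪g' q, S (g p)⟫_ℂ = L₀ p q := fun p q => hL₀ p.1 p.2 q.1 q.2
    constructor
    · constructor
      · -- first covariance
        intro m n m' n'
        rw [← hL (m + 1, n) (m' + 1, n'), ← hL (m, n) (m', n')]
        rw [show ((m + 1 : ℤ), n) = ((m, n).1 + 1, (m, n).2) from rfl,
          show ((m' + 1 : ℤ), n') = ((m', n').1 + 1, (m', n').2) from rfl,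
          ← hUapp (m, n), ← hU'app (m', n'), hUS' (g (m, n)), inner_unitary_both]
      · -- second covariance
        intro m n m' n'
        rw [← hL (m, n + 1) (m', n' + 1), ← hL (m, n) (m', n')]
        have e1 : g (m, n + 1) = lam ^ m • (V : H →L[ℂ] H) (g (m, n)) := by
          rw [hVapp (m, n), smul_smul, ← zpow_add₀ hlam0, add_neg_cancel, zpow_zero, one_smul]
        have e1' : g' (m', n' + 1) = lam ^ m' • (V' : H' →L[ℂ] H') (g' (m', n')) := by
          rw [hV'app (m', n'), smul_smul, ← zpow_add₀ hlam0, add_neg_cancel, zpow_zero, one_smul]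
        rw [e1, e1', map_smul, inner_smul_left, inner_smul_right, hVS' (g (m, n)),
          inner_unitary_both, hconjz m', ← mul_assoc, ← zpow_add₀ hlam0]
        ring_nf
    · -- the square bound with c = ‖S‖ ^ 2
      intro a b x y ξ η
      have e1 : ∑ i, ∑ j, L₀ (x i) (y j) * ξ i * (starRingEnd ℂ) (η j) =
          ⟪∑ j, η j • g' (y j), S (∑ i, ξ i • g (x i))⟫_ℂ := by
        rw [map_sum]
        simp only [map_smul]
        rw [inner_comb (fun i => S (g (x i))) (fun j => g' (y j)) ξ η]
        exact Finset.sum_congr rfl fun i _ => Finset.sum_congr rfl fun j _ => by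
          rw [hL (x i) (y j)]
      have e2 : (∑ i, ∑ i', K (x i) (x i') * ξ i * (starRingEnd ℂ) (ξ i')).re =
          ‖∑ i, ξ i • g (x i)‖ ^ 2 := by
        rw [show ∑ i, ∑ i', K (x i) (x i') * ξ i * (starRingEnd ℂ) (ξ i') =
            ⟪∑ i, ξ i • g (x i), ∑ i, ξ i • g (x i)⟫_ℂ by
          rw [inner_comb (fun i => g (x i)) (fun i => g (x i)) ξ ξ]
          exact Finset.sum_congr rfl fun i _ => Finset.sum_congr rfl fun i' _ => by
            rw [hk (x i) (x i')]]
        exact re_inner_self _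
      have e3 : (∑ j, ∑ j', K' (y j) (y j') * η j * (starRingEnd ℂ) (η j')).re =
          ‖∑ j, η j • g' (y j)‖ ^ 2 := by
        rw [show ∑ j, ∑ j', K' (y j) (y j') * η j * (starRingEnd ℂ) (η j') =
            ⟪∑ j, η j • g' (y j), ∑ j, η j • g' (y j)⟫_ℂ by
          rw [inner_comb (fun j => g' (y j)) (fun j => g' (y j)) η η]
          exact Finset.sum_congr rfl fun j _ => Finset.sum_congr rfl fun j' _ => by
            rw [hk' (y j) (y j')]]
        exact re_inner_self _
      rw [e1, e2, e3]
      have h4 : ‖⟪∑ j, η j • g' (y j), S (∑ i, ξ i • g (x i))⟫_ℂ‖ ≤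
          ‖∑ j, η j • g' (y j)‖ * (‖S‖ * ‖∑ i, ξ i • g (x i)‖) := by
        refine (norm_inner_le_norm _ _).trans ?_
        exact mul_le_mul_of_nonneg_left (S.le_opNorm _) (norm_nonneg _)
      calc ‖⟪∑ j, η j • g' (y j), S (∑ i, ξ i • g (x i))⟫_ℂ‖ ^ 2
          ≤ (‖∑ j, η j • g' (y j)‖ * (‖S‖ * ‖∑ i, ξ i • g (x i)‖)) ^ 2 := by
            exact pow_le_pow_left₀ (norm_nonneg _) h4 2
        _ = ‖S‖ ^ 2 * ‖∑ i, ξ i • g (x i)‖ ^ 2 * ‖∑ j, η j • g' (y j)‖ ^ 2 := by ring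
end
end

section
/- Let λ ∈ ℂ with |λ| = 1, and let K, K' be positive definite maps on ℤ² satisfying K((m+1,n),(m'+1,n')) = K((m,n),(m',n')) and K((m,n+1),(m',n'+1)) = λ^{m-m'} K((m,n),(m',n')) for all m,n,m',n' ∈ ℤ (and likewise for K'), with K' ≤ cK for some c > 0. Let (H_K, U_K, V_K, ξ₀) be the Gabor type cyclic system associated to K. Then there is a unique positive bounded operator S on H_K commuting with U_K and V_K such that ⟨S U_K^m V_K^n ξ₀, U_K^{m'} V_K^{n'} ξ₀⟩ = K'((m,n),(m',n')) for all m,n,m',n' ∈ ℤ. Conversely, if S is a positive bounded operator on H_K commuting with U_K and V_K, then K' defined by K'((m,n),(m',n')) = ⟨S U_K^m V_K^n ξ₀, U_K^{m'} V_K^{n'} ξ₀⟩ is positive definite and satisfies the two covariance relations above. -/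
open scoped InnerProductSpace ComplexOrder Classical
open Complex

noncomputable section

namespace GaborAux

variable {X : Type*}

/-- quadratic form of a kernel over a finset -/
def Qf (L : X → X → ℂ) (s : Finset X) (f g : X → ℂ) : ℂ :=
  ∑ p ∈ s, ∑ q ∈ s, L p q * f p * (starRingEnd ℂ) (g q)

def enum (s : Finset X) : Fin s.card → X := fun i => ((s.equivFin.symm i : s) : X)

lemma sum_enum (s : Finset X) (F : X → ℂ) : ∑ i, F (enum s i) = ∑ p ∈ s, F p := by
  rw [show (∑ i, F (enum s i)) = ∑ a : s, F a from Equiv.sum_comp s.equivFin.symm (fun a : s => F (a : X))]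
  exact Finset.sum_coe_sort s F

lemma Qf_eq_sum (L : X → X → ℂ) (s : Finset X) (f g : X → ℂ) :
    Qf L s f g = ∑ i, ∑ j, L (enum s i) (enum s j) * f (enum s i) *
      (starRingEnd ℂ) (g (enum s j)) := by
  rw [show (∑ i, ∑ j, L (enum s i) (enum s j) * f (enum s i) * (starRingEnd ℂ) (g (enum s j)))
      = ∑ i, ∑ q ∈ s, L (enum s i) q * f (enum s i) * (starRingEnd ℂ) (g q) from
    Finset.sum_congr rfl fun i _ => sum_enum s (fun q => L (enum s i) q * f (enum s i) * (starRingEnd ℂ) (g q))]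
  exact (sum_enum s (fun p => ∑ q ∈ s, L p q * f p * (starRingEnd ℂ) (g q))).symm

lemma Qf_nonneg {L : X → X → ℂ} (hL : IsPosDefKernel L) (s : Finset X) (f : X → ℂ) :
    0 ≤ Qf L s f f := by
  rw [Qf_eq_sum]
  exact hL s.card (enum s) (fun i => f (enum s i))

lemma Qf_le {K K' : X → X → ℂ} {c : ℝ} (hle : KernelLE K' K c) (s : Finset X) (f : X → ℂ) :
    Qf K' s f f ≤ (c : ℂ) * Qf K s f f := by
  rw [Qf_eq_sum, Qf_eq_sum]
  exact hle s.card (enum s) (fun i => f (enum s i))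

lemma posdef_diag_real {L : X → X → ℂ} (hL : IsPosDefKernel L) (p : X) :
    (L p p).im = 0 := by
  have h := hL 1 ![p] ![1]
  simp only [Fin.sum_univ_one, Matrix.cons_val_zero, map_one, mul_one] at h
  exact ((Complex.le_def.1 h).2).symm

lemma posdef_conj {L : X → X → ℂ} (hL : IsPosDefKernel L) (p q : X) :
    (starRingEnd ℂ) (L p q) = L q p := by
  have h2 := hL 2 ![p, q] ![1, 1]
  have h3 := hL 2 ![p, q] ![1, Complex.I]
  simp only [Fin.sum_univ_two, Matrix.cons_val_zero, Matrix.cons_val_one, Matrix.head_cons,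
    map_one, mul_one, one_mul, Complex.conj_I] at h2 h3
  have i2 := (Complex.le_def.1 h2).2
  have i3 := (Complex.le_def.1 h3).2
  have dp := posdef_diag_real hL p
  have dq := posdef_diag_real hL q
  simp only [Complex.add_im, Complex.mul_im, Complex.mul_re, Complex.I_re, Complex.I_im,
    Complex.neg_im, Complex.neg_re, Complex.zero_im] at i2 i3
  apply Complex.ext <;> simp only [Complex.conj_re, Complex.conj_im] <;> nlinarith [i2, i3, dp, dq]


end GaborAux

namespace GaborAux
variable {X : Type*}

lemma Qf_herm {L : X → X → ℂ} (hL : IsPosDefKernel L) (s : Finset X) (f g : X → ℂ) :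
    Qf L s g f = (starRingEnd ℂ) (Qf L s f g) := by
  unfold Qf
  rw [map_sum, Finset.sum_comm]
  refine Finset.sum_congr rfl fun p _ => ?_
  rw [map_sum]
  refine Finset.sum_congr rfl fun q _ => ?_
  rw [map_mul, map_mul, RingHomCompTriple.comp_apply, RingHom.id_apply, posdef_conj hL]
  ring

lemma Qf_expand (L : X → X → ℂ) (s : Finset X) (f g : X → ℂ) (t : ℂ) :
    Qf L s (fun x => f x + t * g x) (fun x => f x + t * g x) =
      Qf L s f f + t * Qf L s g f + (starRingEnd ℂ) t * Qf L s f g +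
        (t * (starRingEnd ℂ) t) * Qf L s g g := by
  unfold Qf
  simp only [Finset.mul_sum, ← Finset.sum_add_distrib]
  refine Finset.sum_congr rfl fun p _ => ?_
  refine Finset.sum_congr rfl fun q _ => ?_
  simp only [map_add, map_mul]
  ring

lemma nonneg_eq_re {z : ℂ} (hz : 0 ≤ z) : z = ((z.re : ℝ) : ℂ) :=
  Complex.ext (Complex.ofReal_re _).symm (by simpa using ((Complex.le_def.1 hz).2).symm)

lemma nonneg_re {z : ℂ} (hz : 0 ≤ z) : 0 ≤ z.re := by
  simpa using (Complex.le_def.1 hz).1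

lemma Qf_CS {L : X → X → ℂ} (hL : IsPosDefKernel L) (s : Finset X) (f g : X → ℂ) :
    ‖Qf L s f g‖ ^ 2 ≤ (Qf L s f f).re * (Qf L s g g).re := by
  have ha0 : 0 ≤ (Qf L s f f).re := nonneg_re (Qf_nonneg hL s f)
  have hd0 : 0 ≤ (Qf L s g g).re := nonneg_re (Qf_nonneg hL s g)
  have hbb : Qf L s f g * (starRingEnd ℂ) (Qf L s f g) = ((‖Qf L s f g‖ : ℂ)) ^ 2 := by
    rw [Complex.mul_conj, Complex.normSq_eq_norm_sq]
    push_cast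
    ring
  have key : ∀ r : ℝ, 0 ≤ (‖Qf L s f g‖ ^ 2 * (Qf L s g g).re) * (r * r) +
      (2 * ‖Qf L s f g‖ ^ 2) * r + (Qf L s f f).re := by
    intro r
    have h0 := Qf_nonneg hL s (fun x => f x + ((r : ℂ) * Qf L s f g) * g x)
    rw [Qf_expand L s f g ((r : ℂ) * Qf L s f g), Qf_herm hL s f g,
      nonneg_eq_re (Qf_nonneg hL s f), nonneg_eq_re (Qf_nonneg hL s g)] at h0
    have hX : (((Qf L s f f).re : ℝ) : ℂ) +
        (r : ℂ) * Qf L s f g * (starRingEnd ℂ) (Qf L s f g) +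
        (starRingEnd ℂ) ((r : ℂ) * Qf L s f g) * Qf L s f g +
        ((r : ℂ) * Qf L s f g * (starRingEnd ℂ) ((r : ℂ) * Qf L s f g)) *
          (((Qf L s g g).re : ℝ) : ℂ) =
        (((‖Qf L s f g‖ ^ 2 * (Qf L s g g).re) * (r * r) +
          (2 * ‖Qf L s f g‖ ^ 2) * r + (Qf L s f f).re : ℝ) : ℂ) := by
      rw [map_mul, Complex.conj_ofReal]
      push_cast
      linear_combination (2 * (r : ℂ) + (r : ℂ) * (r : ℂ) * (((Qf L s g g).re : ℝ) : ℂ)) * hbb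
    rw [hX] at h0
    have := (Complex.le_def.1 h0).1
    simpa only [Complex.zero_re, Complex.ofReal_re] using this
  have hdisc := discrim_le_zero key
  unfold discrim at hdisc
  rcases eq_or_ne (Qf L s f g) 0 with hb0 | hb0
  · rw [hb0]
    simpa using mul_nonneg ha0 hd0
  · have hbn : ‖Qf L s f g‖ ≠ 0 := norm_ne_zero_iff.2 hb0
    have hbpos : 0 < ‖Qf L s f g‖ ^ 2 := by positivity
    nlinarith [hdisc, hbpos]

end GaborAux

namespace GaborAux
variable {X : Type*}

lemma Qf_subset (L : X → X → ℂ) {s t : Finset X} (hts : t ⊆ s) {f g : X → ℂ}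
    (hf : ∀ p ∈ s, p ∉ t → f p = 0) (hg : ∀ q ∈ s, q ∉ t → g q = 0) :
    Qf L s f g = Qf L t f g := by
  unfold Qf
  have hrow : ∀ p : X, ∑ q ∈ s, L p q * f p * (starRingEnd ℂ) (g q) =
      ∑ q ∈ t, L p q * f p * (starRingEnd ℂ) (g q) := by
    intro p
    refine (Finset.sum_subset hts fun q hq hqt => ?_).symm
    rw [hg q hq hqt, map_zero, mul_zero]
  calc ∑ p ∈ s, ∑ q ∈ s, L p q * f p * (starRingEnd ℂ) (g q)
      = ∑ p ∈ s, ∑ q ∈ t, L p q * f p * (starRingEnd ℂ) (g q) :=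
        Finset.sum_congr rfl fun p _ => hrow p
    _ = ∑ p ∈ t, ∑ q ∈ t, L p q * f p * (starRingEnd ℂ) (g q) := by
        refine (Finset.sum_subset hts fun p hp hpt => ?_).symm
        refine Finset.sum_eq_zero fun q _ => ?_
        rw [hf p hp hpt, mul_zero, zero_mul]

lemma Qf_add_left (L : X → X → ℂ) (s : Finset X) (f f' g : X → ℂ) :
    Qf L s (fun x => f x + f' x) g = Qf L s f g + Qf L s f' g := by
  unfold Qf
  simp only [← Finset.sum_add_distrib]
  exact Finset.sum_congr rfl fun p _ => Finset.sum_congr rfl fun q _ => by ring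

lemma Qf_smul_left (L : X → X → ℂ) (s : Finset X) (a : ℂ) (f g : X → ℂ) :
    Qf L s (fun x => a * f x) g = a * Qf L s f g := by
  unfold Qf
  simp only [Finset.mul_sum]
  exact Finset.sum_congr rfl fun p _ => Finset.sum_congr rfl fun q _ => by ring

lemma Qf_add_right (L : X → X → ℂ) (s : Finset X) (f g g' : X → ℂ) :
    Qf L s f (fun x => g x + g' x) = Qf L s f g + Qf L s f g' := by
  unfold Qf
  simp only [← Finset.sum_add_distrib]
  refine Finset.sum_congr rfl fun p _ => Finset.sum_congr rfl fun q _ => ?_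
  rw [map_add]
  ring

lemma Qf_smul_right (L : X → X → ℂ) (s : Finset X) (a : ℂ) (f g : X → ℂ) :
    Qf L s f (fun x => a * g x) = (starRingEnd ℂ) a * Qf L s f g := by
  unfold Qf
  simp only [Finset.mul_sum]
  refine Finset.sum_congr rfl fun p _ => Finset.sum_congr rfl fun q _ => ?_
  rw [map_mul]
  ring

/-- Sesquilinear form associated to a kernel, on finitely supported functions. -/
def Qs (L : X → X → ℂ) (ξ η : X →₀ ℂ) : ℂ := Qf L (ξ.support ∪ η.support) ξ η

lemma Qs_eq_Qf (L : X → X → ℂ) (ξ η : X →₀ ℂ) {s : Finset X}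
    (hξ : ξ.support ⊆ s) (hη : η.support ⊆ s) : Qs L ξ η = Qf L s ξ η := by
  refine (Qf_subset L (Finset.union_subset hξ hη) ?_ ?_).symm
  · exact fun p _ hp => Finsupp.notMem_support_iff.1 fun hmem =>
      hp (Finset.mem_union_left _ hmem)
  · exact fun q _ hq => Finsupp.notMem_support_iff.1 fun hmem =>
      hq (Finset.mem_union_right _ hmem)

lemma Qs_nonneg {L : X → X → ℂ} (hL : IsPosDefKernel L) (ξ : X →₀ ℂ) : 0 ≤ Qs L ξ ξ :=
  Qf_nonneg hL _ _

lemma Qs_add_left (L : X → X → ℂ) (ξ ξ' η : X →₀ ℂ) :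
    Qs L (ξ + ξ') η = Qs L ξ η + Qs L ξ' η := by
  classical
  set s := ξ.support ∪ ξ'.support ∪ η.support with hs
  have h1 : (ξ + ξ').support ⊆ s := fun p hp => by
    rcases Finset.mem_union.1 (Finsupp.support_add hp) with h | h <;>
      simp [hs, Finset.mem_union, h]
  have hξ : ξ.support ⊆ s := fun p hp => by simp [hs, Finset.mem_union, hp]
  have hξ' : ξ'.support ⊆ s := fun p hp => by simp [hs, Finset.mem_union, hp]
  have hη : η.support ⊆ s := fun p hp => by simp [hs, Finset.mem_union, hp]
  rw [Qs_eq_Qf L _ _ h1 hη, Qs_eq_Qf L _ _ hξ hη, Qs_eq_Qf L _ _ hξ' hη]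
  rw [show ((ξ + ξ' : X →₀ ℂ) : X → ℂ) = fun x => ξ x + ξ' x from rfl]
  exact Qf_add_left L s ξ ξ' η

lemma Qs_smul_left (L : X → X → ℂ) (a : ℂ) (ξ η : X →₀ ℂ) :
    Qs L (a • ξ) η = a * Qs L ξ η := by
  have h1 : (a • ξ).support ⊆ ξ.support ∪ η.support := fun p hp => by
    simp [Finset.mem_union, Finsupp.support_smul hp]
  rw [Qs_eq_Qf L _ _ h1 Finset.subset_union_right,
    Qs_eq_Qf L ξ η Finset.subset_union_left Finset.subset_union_right]
  rw [show ((a • ξ : X →₀ ℂ) : X → ℂ) = fun x => a * ξ x from rfl]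
  exact Qf_smul_left L _ a ξ η

lemma Qs_add_right (L : X → X → ℂ) (ξ η η' : X →₀ ℂ) :
    Qs L ξ (η + η') = Qs L ξ η + Qs L ξ η' := by
  classical
  set s := ξ.support ∪ η.support ∪ η'.support with hs
  have h1 : (η + η').support ⊆ s := fun p hp => by
    rcases Finset.mem_union.1 (Finsupp.support_add hp) with h | h <;>
      simp [hs, Finset.mem_union, h]
  have hξ : ξ.support ⊆ s := fun p hp => by simp [hs, Finset.mem_union, hp]
  have hη : η.support ⊆ s := fun p hp => by simp [hs, Finset.mem_union, hp]
  have hη' : η'.support ⊆ s := fun p hp => by simp [hs, Finset.mem_union, hp]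
  rw [Qs_eq_Qf L _ _ hξ h1, Qs_eq_Qf L _ _ hξ hη, Qs_eq_Qf L _ _ hξ hη']
  rw [show ((η + η' : X →₀ ℂ) : X → ℂ) = fun x => η x + η' x from rfl]
  exact Qf_add_right L s ξ η η'

lemma Qs_smul_right (L : X → X → ℂ) (a : ℂ) (ξ η : X →₀ ℂ) :
    Qs L ξ (a • η) = (starRingEnd ℂ) a * Qs L ξ η := by
  have h1 : (a • η).support ⊆ ξ.support ∪ η.support := fun p hp => by
    simp [Finset.mem_union, Finsupp.support_smul hp]
  rw [Qs_eq_Qf L _ _ Finset.subset_union_left h1,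
    Qs_eq_Qf L ξ η Finset.subset_union_left Finset.subset_union_right]
  rw [show ((a • η : X →₀ ℂ) : X → ℂ) = fun x => a * η x from rfl]
  exact Qf_smul_right L _ a ξ η

lemma Qs_single {L : X → X → ℂ} (p q : X) :
    Qs L (Finsupp.single p 1) (Finsupp.single q 1) = L p q := by
  classical
  have hp : p ∈ (Finsupp.single p (1:ℂ)).support ∪ (Finsupp.single q (1:ℂ)).support := by
    simp [Finsupp.support_single_ne_zero p (one_ne_zero (α := ℂ))]
  have hq : q ∈ (Finsupp.single p (1:ℂ)).support ∪ (Finsupp.single q (1:ℂ)).support := by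
    simp [Finsupp.support_single_ne_zero q (one_ne_zero (α := ℂ))]
  unfold Qs Qf
  rw [Finset.sum_eq_single_of_mem p hp]
  · rw [Finset.sum_eq_single_of_mem q hq]
    · simp
    · intro q' _ hq'
      simp [Finsupp.single_apply, hq'.symm]  -- conj (single q 1 q') = 0
  · intro p' _ hp'
    refine Finset.sum_eq_zero fun q' _ => ?_
    simp [Finsupp.single_apply, hp'.symm]

end GaborAux

namespace GaborAux

section Hilbert
variable {X : Type*} {H : Type*} [NormedAddCommGroup H] [InnerProductSpace ℂ H]

/-- finite linear combination of the vectors `e p`. -/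
def Phif (e : X → H) (s : Finset X) (f : X → ℂ) : H := ∑ p ∈ s, f p • e p

lemma inner_Phif (e : X → H) {K : X → X → ℂ} (hinner : ∀ p q, ⟪e q, e p⟫_ℂ = K p q)
    (s : Finset X) (f g : X → ℂ) : ⟪Phif e s g, Phif e s f⟫_ℂ = Qf K s f g := by
  unfold Phif Qf
  calc ⟪∑ q ∈ s, g q • e q, ∑ p ∈ s, f p • e p⟫_ℂ
      = ∑ q ∈ s, ∑ p ∈ s, (starRingEnd ℂ) (g q) * (f p * K p q) := by
        rw [sum_inner]
        refine Finset.sum_congr rfl fun q _ => ?_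
        rw [inner_smul_left, inner_sum, Finset.mul_sum]
        refine Finset.sum_congr rfl fun p _ => ?_
        rw [inner_smul_right, hinner p q]
    _ = ∑ p ∈ s, ∑ q ∈ s, K p q * f p * (starRingEnd ℂ) (g q) := by
        rw [Finset.sum_comm]
        exact Finset.sum_congr rfl fun p _ => Finset.sum_congr rfl fun q _ => by ring

lemma normsq_Phif (e : X → H) {K : X → X → ℂ} (hinner : ∀ p q, ⟪e q, e p⟫_ℂ = K p q)
    (s : Finset X) (f : X → ℂ) : Qf K s f f = ((‖Phif e s f‖ ^ 2 : ℝ) : ℂ) := by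
  rw [← inner_Phif e hinner s f f, inner_self_eq_norm_sq_to_K]
  norm_cast

lemma lc_eq_Phif (e : X → H) (ξ : X →₀ ℂ) {s : Finset X} (hs : ξ.support ⊆ s) :
    Finsupp.linearCombination ℂ e ξ = Phif e s ξ := by
  rw [Finsupp.linearCombination_apply, Finsupp.sum]
  exact Finset.sum_subset hs fun p _ hp => by
    rw [Finsupp.notMem_support_iff.1 hp, zero_smul]

lemma Qs_norm_le (e : X → H) {K K' : X → X → ℂ} (hK' : IsPosDefKernel K') {c : ℝ}
    (hc : 0 ≤ c) (hle : KernelLE K' K c) (hinner : ∀ p q, ⟪e q, e p⟫_ℂ = K p q)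
    (ξ η : X →₀ ℂ) :
    ‖Qs K' ξ η‖ ≤ c * ‖Finsupp.linearCombination ℂ e ξ‖ *
      ‖Finsupp.linearCombination ℂ e η‖ := by
  classical
  set s := ξ.support ∪ η.support with hs
  have h1 : Qs K' ξ η = Qf K' s ξ η :=
    Qs_eq_Qf K' ξ η Finset.subset_union_left Finset.subset_union_right
  have hcs := Qf_CS hK' s ξ η
  have hΦξ : Finsupp.linearCombination ℂ e ξ = Phif e s ξ :=
    lc_eq_Phif e ξ Finset.subset_union_left
  have hΦη : Finsupp.linearCombination ℂ e η = Phif e s η :=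
    lc_eq_Phif e η Finset.subset_union_right
  have hre : ∀ f : X → ℂ, (Qf K' s f f).re ≤ c * ‖Phif e s f‖ ^ 2 := by
    intro f
    have h2 := (Complex.le_def.1 (Qf_le hle s f)).1
    rw [normsq_Phif e hinner s f, ← Complex.ofReal_mul, Complex.ofReal_re] at h2
    exact h2
  have h0ξ : 0 ≤ (Qf K' s (ξ : X → ℂ) ξ).re := nonneg_re (Qf_nonneg hK' s ξ)
  have h0η : 0 ≤ (Qf K' s (η : X → ℂ) η).re := nonneg_re (Qf_nonneg hK' s η)
  rw [h1, hΦξ, hΦη]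
  have hq := hcs
  have hξ2 := hre ξ
  have hη2 := hre η
  have hnΦξ : (0:ℝ) ≤ ‖Phif e s ξ‖ := norm_nonneg _
  have hnΦη : (0:ℝ) ≤ ‖Phif e s η‖ := norm_nonneg _
  have hnq : (0:ℝ) ≤ ‖Qf K' s (ξ : X → ℂ) η‖ := norm_nonneg _
  have hR : (0:ℝ) ≤ c * ‖Phif e s ξ‖ * ‖Phif e s η‖ := by positivity
  have hQ2 : ‖Qf K' s (ξ : X → ℂ) η‖ ^ 2 ≤ (c * ‖Phif e s ξ‖ * ‖Phif e s η‖) ^ 2 := by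
    nlinarith [mul_le_mul hξ2 hη2 h0η (by positivity : (0:ℝ) ≤ c * ‖Phif e s ξ‖ ^ 2)]
  nlinarith [hQ2, hnq, hR]

end Hilbert
end GaborAux

namespace GaborAux
section Hilbert2
variable {X : Type*} {H : Type*} [NormedAddCommGroup H] [InnerProductSpace ℂ H]

theorem eq_of_inner_eq_on_range {e : X → H}
    (hdense : Dense (↑(Submodule.span ℂ (Set.range e)) : Set H)) {x y : H}
    (h : ∀ p, ⟪e p, x⟫_ℂ = ⟪e p, y⟫_ℂ) : x = y := by
  refine hdense.eq_of_inner_right ℂ ?_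
  intro v hv
  induction hv using Submodule.span_induction with
  | mem w hw => obtain ⟨p, rfl⟩ := hw; exact h p
  | zero => rw [inner_zero_left, inner_zero_left]
  | add w₁ w₂ h₁ h₂ ih₁ ih₂ => rw [inner_add_left, inner_add_left, ih₁, ih₂]
  | smul a w hw ih => rw [inner_smul_left, inner_smul_left, ih]

end Hilbert2
end GaborAux

namespace GaborAux

theorem exists_posOp {X : Type*} (K K' : X → X → ℂ) (hK' : IsPosDefKernel K')
    {c : ℝ} (hc : 0 < c) (hle : KernelLE K' K c)
    {H : Type*} [NormedAddCommGroup H] [InnerProductSpace ℂ H] [CompleteSpace H]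
    (e : X → H) (hdense : Dense (↑(Submodule.span ℂ (Set.range e)) : Set H))
    (hinner : ∀ p q, ⟪e q, e p⟫_ℂ = K p q) :
    ∃ S : H →L[ℂ] H, IsPositiveOp S ∧ ∀ p q, ⟪e q, S (e p)⟫_ℂ = K' p q := by
  classical
  set Φ : (X →₀ ℂ) →ₗ[ℂ] H := Finsupp.linearCombination ℂ e with hΦdef
  set M : Submodule ℂ H := LinearMap.range Φ with hMdef
  have hMdense : Dense (M : Set H) := by
    rw [hMdef, hΦdef, Finsupp.range_linearCombination]
    exact hdense
  have hQbound : ∀ ξ η : X →₀ ℂ, ‖Qs K' ξ η‖ ≤ c * ‖Φ ξ‖ * ‖Φ η‖ := fun ξ η =>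
    Qs_norm_le e hK' hc.le hle hinner ξ η
  have hiso : Isometry (M.subtypeL) := fun x y => rfl
  have hU : IsUniformInducing (M.subtypeL) := hiso.isUniformInducing
  have hdr : DenseRange (M.subtypeL) := by
    have : Set.range (M.subtypeL) = (M : Set H) := Subtype.range_coe
    rw [DenseRange, this]
    exact hMdense
  -- characterize vectors by inner products against elements of M
  have eqM : ∀ x y : H, (∀ η : X →₀ ℂ, ⟪Φ η, x⟫_ℂ = ⟪Φ η, y⟫_ℂ) → x = y := by
    intro x y h
    refine hMdense.eq_of_inner_right ℂ ?_
    rintro _ ⟨η, rfl⟩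
    exact h η
  -- the linear functional attached to ξ
  let gfun : (X →₀ ℂ) → (X →₀ ℂ) →ₗ[ℂ] ℂ := fun ξ =>
    { toFun := fun η => (starRingEnd ℂ) (Qs K' ξ η)
      map_add' := fun η η' => by
        show (starRingEnd ℂ) (Qs K' ξ (η + η')) =
          (starRingEnd ℂ) (Qs K' ξ η) + (starRingEnd ℂ) (Qs K' ξ η')
        rw [Qs_add_right, map_add]
      map_smul' := fun a η => by
        show (starRingEnd ℂ) (Qs K' ξ (a • η)) = (RingHom.id ℂ) a • (starRingEnd ℂ) (Qs K' ξ η)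
        rw [Qs_smul_right, map_mul, Complex.conj_conj, RingHom.id_apply, smul_eq_mul] }
  have hker : ∀ ξ : X →₀ ℂ, LinearMap.ker Φ ≤ LinearMap.ker (gfun ξ) := by
    intro ξ η hη
    rw [LinearMap.mem_ker] at hη ⊢
    have := hQbound ξ η
    rw [hη, norm_zero, mul_zero] at this
    simp only [gfun, LinearMap.coe_mk, AddHom.coe_mk]
    rw [show Qs K' ξ η = 0 from norm_le_zero_iff.1 this, map_zero]
  let gM : (X →₀ ℂ) → (M →ₗ[ℂ] ℂ) := fun ξ =>
    (Submodule.liftQ (LinearMap.ker Φ) (gfun ξ) (hker ξ)).comp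
      (LinearMap.quotKerEquivRange Φ).symm.toLinearMap
  have hgM : ∀ ξ η : X →₀ ℂ, ∀ hm : Φ η ∈ M,
      gM ξ ⟨Φ η, hm⟩ = (starRingEnd ℂ) (Qs K' ξ η) := by
    intro ξ η hm
    simp only [gM, LinearMap.coe_comp, Function.comp_apply, LinearEquiv.coe_coe]
    rw [LinearMap.quotKerEquivRange_symm_apply_image Φ]
    rw [Submodule.mkQ_apply, Submodule.liftQ_apply]
    rfl
  have hgMbound : ∀ ξ : X →₀ ℂ, ∀ v : M, ‖gM ξ v‖ ≤ (c * ‖Φ ξ‖) * ‖v‖ := by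
    rintro ξ ⟨v, η, rfl⟩
    rw [hgM ξ η (LinearMap.mem_range_self Φ η), RCLike.norm_conj]
    have : ‖(⟨Φ η, LinearMap.mem_range_self Φ η⟩ : M)‖ = ‖Φ η‖ := rfl
    rw [this]
    exact hQbound ξ η
  let gC : (X →₀ ℂ) → (M →L[ℂ] ℂ) := fun ξ => (gM ξ).mkContinuous (c * ‖Φ ξ‖) (hgMbound ξ)
  let ghat : (X →₀ ℂ) → (H →L[ℂ] ℂ) := fun ξ => (gC ξ).extend M.subtypeL
  have hghat : ∀ ξ η : X →₀ ℂ, ghat ξ (Φ η) = (starRingEnd ℂ) (Qs K' ξ η) := by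
    intro ξ η
    have h1 := ContinuousLinearMap.extend_eq (gC ξ) hdr hU
      ⟨Φ η, LinearMap.mem_range_self Φ η⟩
    have h2 : M.subtypeL ⟨Φ η, LinearMap.mem_range_self Φ η⟩ = Φ η := rfl
    rw [h2] at h1
    rw [h1]
    show gM ξ _ = _
    exact hgM ξ η _
  have hghatnorm : ∀ ξ : X →₀ ℂ, ‖ghat ξ‖ ≤ c * ‖Φ ξ‖ := by
    intro ξ
    have hb : ∀ x : M, ‖x‖ ≤ (1 : NNReal) * ‖M.subtypeL x‖ := fun x => by
      rw [NNReal.coe_one, one_mul]; rfl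
    have h1 := ContinuousLinearMap.opNorm_extend_le (gC ξ) hdr hb
    have h2 : ‖gC ξ‖ ≤ c * ‖Φ ξ‖ :=
      LinearMap.mkContinuous_norm_le _ (by positivity) _
    calc ‖ghat ξ‖ ≤ (1 : NNReal) * ‖gC ξ‖ := h1
      _ = ‖gC ξ‖ := by rw [NNReal.coe_one, one_mul]
      _ ≤ c * ‖Φ ξ‖ := h2
  -- the vectors S (Φ ξ)
  let Svec : (X →₀ ℂ) → H := fun ξ => (InnerProductSpace.toDual ℂ H).symm (ghat ξ)
  have hSvec : ∀ ξ η : X →₀ ℂ, ⟪Φ η, Svec ξ⟫_ℂ = Qs K' ξ η := by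
    intro ξ η
    have h1 : ⟪Svec ξ, Φ η⟫_ℂ = ghat ξ (Φ η) := InnerProductSpace.toDual_symm_apply
    rw [← inner_conj_symm, h1, hghat, Complex.conj_conj]
  have hSvecnorm : ∀ ξ : X →₀ ℂ, ‖Svec ξ‖ ≤ c * ‖Φ ξ‖ := fun ξ => by
    rw [show ‖Svec ξ‖ = ‖ghat ξ‖ from LinearIsometryEquiv.norm_map _ _]
    exact hghatnorm ξ
  have hSadd : ∀ ξ ξ' : X →₀ ℂ, Svec (ξ + ξ') = Svec ξ + Svec ξ' := by
    intro ξ ξ'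
    refine eqM _ _ fun η => ?_
    rw [inner_add_right, hSvec, hSvec, hSvec, Qs_add_left]
  have hSsmul : ∀ (a : ℂ) (ξ : X →₀ ℂ), Svec (a • ξ) = a • Svec ξ := by
    intro a ξ
    refine eqM _ _ fun η => ?_
    rw [inner_smul_right, hSvec, hSvec, Qs_smul_left]
  let SL : (X →₀ ℂ) →ₗ[ℂ] H :=
    { toFun := Svec
      map_add' := hSadd
      map_smul' := fun a ξ => by rw [RingHom.id_apply]; exact hSsmul a ξ }
  have hSker : LinearMap.ker Φ ≤ LinearMap.ker SL := by
    intro η hη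
    rw [LinearMap.mem_ker] at hη ⊢
    show Svec η = 0
    refine eqM _ _ fun η' => ?_
    rw [hSvec, inner_zero_right]
    have := hQbound η η'
    rw [hη, norm_zero, mul_zero, zero_mul] at this
    exact norm_le_zero_iff.1 this
  let SM : M →ₗ[ℂ] H :=
    (Submodule.liftQ (LinearMap.ker Φ) SL hSker).comp
      (LinearMap.quotKerEquivRange Φ).symm.toLinearMap
  have hSM : ∀ (η : X →₀ ℂ) (hm : Φ η ∈ M), SM ⟨Φ η, hm⟩ = Svec η := by
    intro η hm
    simp only [SM, LinearMap.coe_comp, Function.comp_apply, LinearEquiv.coe_coe]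
    rw [LinearMap.quotKerEquivRange_symm_apply_image Φ, Submodule.mkQ_apply,
      Submodule.liftQ_apply]
    rfl
  have hSMbound : ∀ v : M, ‖SM v‖ ≤ c * ‖v‖ := by
    rintro ⟨v, η, rfl⟩
    rw [hSM η (LinearMap.mem_range_self Φ η)]
    exact hSvecnorm η
  let SMc : M →L[ℂ] H := SM.mkContinuous c hSMbound
  let S : H →L[ℂ] H := SMc.extend M.subtypeL
  have hSΦ : ∀ ξ : X →₀ ℂ, S (Φ ξ) = Svec ξ := by
    intro ξ
    have h1 := ContinuousLinearMap.extend_eq SMc hdr hU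
      ⟨Φ ξ, LinearMap.mem_range_self Φ ξ⟩
    have h2 : M.subtypeL ⟨Φ ξ, LinearMap.mem_range_self Φ ξ⟩ = Φ ξ := rfl
    rw [h2] at h1
    rw [h1]
    show SM _ = _
    exact hSM ξ _
  refine ⟨S, ?_, ?_⟩
  · -- positivity
    intro v
    have hsub : (M : Set H) ⊆ {w : H | 0 ≤ ⟪w, S w⟫_ℂ} := by
      rintro w ⟨η, rfl⟩
      show 0 ≤ ⟪Φ η, S (Φ η)⟫_ℂ
      rw [hSΦ, hSvec]
      exact Qs_nonneg hK' η
    have hclosed : IsClosed {w : H | 0 ≤ ⟪w, S w⟫_ℂ} := by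
      have hcont : Continuous fun w : H => ⟪w, S w⟫_ℂ :=
        continuous_id.inner S.continuous
      have : {w : H | 0 ≤ ⟪w, S w⟫_ℂ} =
          (fun w : H => ⟪w, S w⟫_ℂ) ⁻¹' {z : ℂ | 0 ≤ z} := rfl
      rw [this]
      refine (IsClosed.preimage hcont ?_)
      have : {z : ℂ | 0 ≤ z} = Complex.re ⁻¹' Set.Ici 0 ∩ Complex.im ⁻¹' {0} := by
        ext z
        simp only [Set.mem_setOf_eq, Set.mem_inter_iff, Set.mem_preimage, Set.mem_Ici,
          Set.mem_singleton_iff, Complex.le_def, Complex.zero_re, Complex.zero_im]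
        exact ⟨fun ⟨h1, h2⟩ => ⟨h1, h2.symm⟩, fun ⟨h1, h2⟩ => ⟨h1, h2.symm⟩⟩
      rw [this]
      exact (isClosed_Ici.preimage Complex.continuous_re).inter
        (isClosed_singleton.preimage Complex.continuous_im)
    have hsub2 := hclosed.closure_subset_iff.2 hsub
    rw [hMdense.closure_eq] at hsub2
    exact hsub2 (Set.mem_univ v)
  · intro p q
    have hp : e p = Φ (Finsupp.single p 1) := by
      rw [hΦdef]
      rw [Finsupp.linearCombination_single, one_smul]
    have hq : e q = Φ (Finsupp.single q 1) := by
      rw [hΦdef, Finsupp.linearCombination_single, one_smul]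
    rw [hp, hq, hSΦ, hSvec, Qs_single]

end GaborAux

namespace GaborAux

variable {H : Type*} [NormedAddCommGroup H] [InnerProductSpace ℂ H] [CompleteSpace H]

lemma inner_unitary_map (W : unitary (H →L[ℂ] H)) (x y : H) :
    ⟪(W : H →L[ℂ] H) x, (W : H →L[ℂ] H) y⟫_ℂ = ⟪x, y⟫_ℂ := by
  rw [← ContinuousLinearMap.adjoint_inner_right]
  have h1 : (ContinuousLinearMap.adjoint (W : H →L[ℂ] H)) ((W : H →L[ℂ] H) y) = y := by
    rw [← ContinuousLinearMap.star_eq_adjoint, ← ContinuousLinearMap.mul_apply,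
      (Unitary.mem_iff.mp W.prop).1, ContinuousLinearMap.one_apply]
  rw [h1]

lemma gabor_U_act (U V : unitary (H →L[ℂ] H)) (ξ₀ : H) (m n : ℤ) :
    (U : H →L[ℂ] H) (gaborVec U V ξ₀ (m, n)) = gaborVec U V ξ₀ (m + 1, n) := by
  unfold gaborVec
  have h : (U ^ (m + 1) * V ^ n : unitary (H →L[ℂ] H)) = U * (U ^ m * V ^ n) := by
    rw [show m + 1 = 1 + m from add_comm m 1, zpow_add, zpow_one, mul_assoc]
  simp only [h, MulMemClass.coe_mul, ContinuousLinearMap.mul_apply]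

lemma gabor_commU {lam : ℂ} (hlam0 : lam ≠ 0) (U V : unitary (H →L[ℂ] H))
    (hcomm : (U : H →L[ℂ] H) * (V : H →L[ℂ] H) =
      lam • ((V : H →L[ℂ] H) * (U : H →L[ℂ] H))) (m : ℤ) :
    ∀ x : H, (V : H →L[ℂ] H) (((U ^ m : unitary (H →L[ℂ] H)) : H →L[ℂ] H) x) =
      lam ^ (-m) • ((U ^ m : unitary (H →L[ℂ] H)) : H →L[ℂ] H) ((V : H →L[ℂ] H) x) := by
  have hbase : ∀ y : H, (U : H →L[ℂ] H) ((V : H →L[ℂ] H) y) =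
      lam • (V : H →L[ℂ] H) ((U : H →L[ℂ] H) y) := by
    intro y
    have := congrArg (fun T : H →L[ℂ] H => T y) hcomm
    simpa only [ContinuousLinearMap.mul_apply, ContinuousLinearMap.smul_apply] using this
  have hbase' : ∀ y : H, (V : H →L[ℂ] H) ((U : H →L[ℂ] H) y) =
      lam⁻¹ • (U : H →L[ℂ] H) ((V : H →L[ℂ] H) y) := by
    intro y
    rw [hbase y, smul_smul, inv_mul_cancel₀ hlam0, one_smul]
  have hwu : ∀ y : H, ((U⁻¹ : unitary (H →L[ℂ] H)) : H →L[ℂ] H) ((U : H →L[ℂ] H) y) = y := by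
    intro y
    have h1 : (U⁻¹ * U : unitary (H →L[ℂ] H)) = 1 := inv_mul_cancel U
    have h2 : ((U⁻¹ : unitary (H →L[ℂ] H)) : H →L[ℂ] H) * (U : H →L[ℂ] H) = 1 := by
      rw [← MulMemClass.coe_mul, h1, OneMemClass.coe_one]
    rw [← ContinuousLinearMap.mul_apply, h2, ContinuousLinearMap.one_apply]
  have huw : ∀ y : H, (U : H →L[ℂ] H) (((U⁻¹ : unitary (H →L[ℂ] H)) : H →L[ℂ] H) y) = y := by
    intro y
    have h1 : (U * U⁻¹ : unitary (H →L[ℂ] H)) = 1 := mul_inv_cancel U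
    have h2 : (U : H →L[ℂ] H) * ((U⁻¹ : unitary (H →L[ℂ] H)) : H →L[ℂ] H) = 1 := by
      rw [← MulMemClass.coe_mul, h1, OneMemClass.coe_one]
    rw [← ContinuousLinearMap.mul_apply, h2, ContinuousLinearMap.one_apply]
  have hinv : ∀ y : H, (V : H →L[ℂ] H) (((U⁻¹ : unitary (H →L[ℂ] H)) : H →L[ℂ] H) y) =
      lam • ((U⁻¹ : unitary (H →L[ℂ] H)) : H →L[ℂ] H) ((V : H →L[ℂ] H) y) := by
    intro y
    have h2 : ((U⁻¹ : unitary (H →L[ℂ] H)) : H →L[ℂ] H) ((V : H →L[ℂ] H) y) =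
        lam⁻¹ • (V : H →L[ℂ] H) (((U⁻¹ : unitary (H →L[ℂ] H)) : H →L[ℂ] H) y) := by
      conv_lhs => rw [show (V : H →L[ℂ] H) y =
        (V : H →L[ℂ] H) ((U : H →L[ℂ] H) (((U⁻¹ : unitary (H →L[ℂ] H)) : H →L[ℂ] H) y)) from
          by rw [huw]]
      rw [hbase', map_smul, hwu]
    rw [h2, smul_smul, mul_inv_cancel₀ hlam0, one_smul]
  induction m using Int.induction_on with
  | zero =>
    intro x
    rw [zpow_zero, OneMemClass.coe_one, ContinuousLinearMap.one_apply,
      ContinuousLinearMap.one_apply, neg_zero, zpow_zero, one_smul]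
  | succ k ih =>
    intro x
    have hcoe : ((U ^ ((k : ℤ) + 1) : unitary (H →L[ℂ] H)) : H →L[ℂ] H) =
        ((U ^ (k : ℤ) : unitary (H →L[ℂ] H)) : H →L[ℂ] H) * (U : H →L[ℂ] H) := by
      rw [← MulMemClass.coe_mul, ← zpow_add_one]
    rw [hcoe, ContinuousLinearMap.mul_apply, ih ((U : H →L[ℂ] H) x)]
    rw [hbase' x, map_smul, smul_smul, ContinuousLinearMap.mul_apply]
    rw [show (-((k : ℤ) + 1)) = (-(k : ℤ)) + (-1) by ring, zpow_add₀ hlam0, zpow_neg_one]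
  | pred k ih =>
    intro x
    have hcoe : ((U ^ (-(k : ℤ) - 1) : unitary (H →L[ℂ] H)) : H →L[ℂ] H) =
        ((U ^ (-(k : ℤ)) : unitary (H →L[ℂ] H)) : H →L[ℂ] H) *
          ((U⁻¹ : unitary (H →L[ℂ] H)) : H →L[ℂ] H) := by
      rw [← MulMemClass.coe_mul, ← zpow_sub_one]
    rw [hcoe, ContinuousLinearMap.mul_apply,
      ih (((U⁻¹ : unitary (H →L[ℂ] H)) : H →L[ℂ] H) x), hinv x, map_smul, smul_smul,
      ContinuousLinearMap.mul_apply]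
    rw [show (-(-(k : ℤ) - 1)) = (-(-(k : ℤ))) + 1 by ring, zpow_add₀ hlam0, zpow_one]

lemma gabor_V_act {lam : ℂ} (hlam0 : lam ≠ 0) (U V : unitary (H →L[ℂ] H)) (ξ₀ : H)
    (hcomm : (U : H →L[ℂ] H) * (V : H →L[ℂ] H) =
      lam • ((V : H →L[ℂ] H) * (U : H →L[ℂ] H))) (m n : ℤ) :
    (V : H →L[ℂ] H) (gaborVec U V ξ₀ (m, n)) = lam ^ (-m) • gaborVec U V ξ₀ (m, n + 1) := by
  unfold gaborVec
  simp only [MulMemClass.coe_mul, ContinuousLinearMap.mul_apply]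
  rw [gabor_commU hlam0 U V hcomm m]
  congr 1
  have h : ((V ^ (n + 1) : unitary (H →L[ℂ] H)) : H →L[ℂ] H) =
      (V : H →L[ℂ] H) * ((V ^ n : unitary (H →L[ℂ] H)) : H →L[ℂ] H) := by
    rw [← MulMemClass.coe_mul, ← zpow_one_add, add_comm]
  rw [h, ContinuousLinearMap.mul_apply]

lemma gabor_V_act' {lam : ℂ} (hlam0 : lam ≠ 0) (U V : unitary (H →L[ℂ] H)) (ξ₀ : H)
    (hcomm : (U : H →L[ℂ] H) * (V : H →L[ℂ] H) =
      lam • ((V : H →L[ℂ] H) * (U : H →L[ℂ] H))) (m n : ℤ) :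
    gaborVec U V ξ₀ (m, n + 1) = lam ^ m • (V : H →L[ℂ] H) (gaborVec U V ξ₀ (m, n)) := by
  rw [gabor_V_act hlam0 U V ξ₀ hcomm m n, smul_smul, ← zpow_add₀ hlam0, add_neg_cancel,
    zpow_zero, one_smul]

end GaborAux


/-- Positive operators commuting with a Gabor type cyclic system correspond to covariant
positive definite kernels `K' ≤ c K`. -/
theorem gabor_commutant_positive_operators (lam : ℂ) (hlam : ‖lam‖ = 1)
    (K : ℤ × ℤ → ℤ × ℤ → ℂ) (hK : IsPosDefKernel K) (hKcov : GaborCovariant lam K)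
    {H : Type*} [NormedAddCommGroup H] [InnerProductSpace ℂ H] [CompleteSpace H]
    (U V : unitary (H →L[ℂ] H)) (ξ₀ : H) (hsys : IsGaborSystem lam K U V ξ₀) :
    (∀ (K' : ℤ × ℤ → ℤ × ℤ → ℂ) (c : ℝ), 0 < c → IsPosDefKernel K' →
      GaborCovariant lam K' → KernelLE K' K c →
      ∃! S : H →L[ℂ] H,
        IsPositiveOp S ∧
        S.comp (U : H →L[ℂ] H) = (U : H →L[ℂ] H).comp S ∧
        S.comp (V : H →L[ℂ] H) = (V : H →L[ℂ] H).comp S ∧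
        ∀ m n m' n' : ℤ,
          ⟪gaborVec U V ξ₀ (m', n'), S (gaborVec U V ξ₀ (m, n))⟫_ℂ = K' (m, n) (m', n')) ∧
    (∀ S : H →L[ℂ] H, IsPositiveOp S →
      S.comp (U : H →L[ℂ] H) = (U : H →L[ℂ] H).comp S →
      S.comp (V : H →L[ℂ] H) = (V : H →L[ℂ] H).comp S →
      IsPosDefKernel (fun p q : ℤ × ℤ => ⟪gaborVec U V ξ₀ q, S (gaborVec U V ξ₀ p)⟫_ℂ) ∧
      GaborCovariant lam
        (fun p q : ℤ × ℤ => ⟪gaborVec U V ξ₀ q, S (gaborVec U V ξ₀ p)⟫_ℂ)) := by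
    classical
  obtain ⟨hcomm, hdense, hK_inner⟩ := hsys
  set e : ℤ × ℤ → H := gaborVec U V ξ₀ with he
  have hlam0 : lam ≠ 0 := by
    intro h
    rw [h] at hlam
    simp at hlam
  have hconjlam : (starRingEnd ℂ) lam = lam⁻¹ := by
    have h1 : lam * (starRingEnd ℂ) lam = 1 := by
      rw [Complex.mul_conj, Complex.normSq_eq_norm_sq, hlam]
      norm_num
    exact (inv_eq_of_mul_eq_one_right h1).symm
  have hconjzpow : ∀ k : ℤ, (starRingEnd ℂ) (lam ^ k) = lam ^ (-k) := by
    intro k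
    rw [map_zpow₀, hconjlam, ← zpow_neg_one, ← zpow_mul, neg_one_mul]
  have hinner : ∀ p q : ℤ × ℤ, ⟪e q, e p⟫_ℂ = K p q := fun p q =>
    hK_inner p.1 p.2 q.1 q.2
  have hU_act : ∀ m n : ℤ, (U : H →L[ℂ] H) (e (m, n)) = e (m + 1, n) := fun m n =>
    GaborAux.gabor_U_act U V ξ₀ m n
  have hV_act : ∀ m n : ℤ, (V : H →L[ℂ] H) (e (m, n)) = lam ^ (-m) • e (m, n + 1) := fun m n =>
    GaborAux.gabor_V_act hlam0 U V ξ₀ hcomm m n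
  have hV_act' : ∀ m n : ℤ, e (m, n + 1) = lam ^ m • (V : H →L[ℂ] H) (e (m, n)) := fun m n =>
    GaborAux.gabor_V_act' hlam0 U V ξ₀ hcomm m n
  constructor
  · -- existence and uniqueness
    intro K' c hc hK'pos hK'cov hle
    obtain ⟨S, hSpos, hSval⟩ := GaborAux.exists_posOp K K' hK'pos hc hle e hdense hinner
    have hSU : S.comp (U : H →L[ℂ] H) = (U : H →L[ℂ] H).comp S := by
      apply ContinuousLinearMap.ext_on hdense
      rintro _ ⟨⟨m, n⟩, rfl⟩
      show S ((U : H →L[ℂ] H) (e (m, n))) = (U : H →L[ℂ] H) (S (e (m, n)))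
      rw [hU_act m n]
      apply GaborAux.eq_of_inner_eq_on_range hdense
      rintro ⟨m', n'⟩
      have h1 : e (m', n') = (U : H →L[ℂ] H) (e (m' - 1, n')) := by
        rw [hU_act (m' - 1) n', sub_add_cancel]
      rw [hSval (m + 1, n) (m', n')]
      conv_rhs => rw [h1]
      rw [GaborAux.inner_unitary_map U, hSval (m, n) (m' - 1, n')]
      have := hK'cov.1 m n (m' - 1) n'
      rw [sub_add_cancel] at this
      exact this
    have hSV : S.comp (V : H →L[ℂ] H) = (V : H →L[ℂ] H).comp S := by
      apply ContinuousLinearMap.ext_on hdense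
      rintro _ ⟨⟨m, n⟩, rfl⟩
      show S ((V : H →L[ℂ] H) (e (m, n))) = (V : H →L[ℂ] H) (S (e (m, n)))
      rw [hV_act m n, map_smul]
      apply GaborAux.eq_of_inner_eq_on_range hdense
      rintro ⟨m', n'⟩
      rw [inner_smul_right, hSval (m, n + 1) (m', n')]
      have h1 : e (m', n') = lam ^ m' • (V : H →L[ℂ] H) (e (m', n' - 1)) := by
        rw [← hV_act' m' (n' - 1), sub_add_cancel]
      conv_rhs => rw [h1]
      rw [inner_smul_left, GaborAux.inner_unitary_map V, hSval (m, n) (m', n' - 1)]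
      have hcov := hK'cov.2 m n m' (n' - 1)
      rw [sub_add_cancel] at hcov
      rw [hcov, hconjzpow m', ← mul_assoc, ← zpow_add₀ hlam0,
        show -m + (m - m') = -m' by ring]
    refine ⟨S, ⟨hSpos, hSU, hSV, fun m n m' n' => hSval (m, n) (m', n')⟩, ?_⟩
    intro S' hS'
    apply ContinuousLinearMap.ext_on hdense
    rintro _ ⟨⟨m, n⟩, rfl⟩
    apply GaborAux.eq_of_inner_eq_on_range hdense
    rintro ⟨m', n'⟩
    rw [show (S' (e (m, n))) = S' (e (m, n)) from rfl]
    rw [hS'.2.2.2 m n m' n', hSval (m, n) (m', n')]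
  · -- converse
    intro S hSpos hcu hcv
    have hScomm_u : ∀ x : H, S ((U : H →L[ℂ] H) x) = (U : H →L[ℂ] H) (S x) := by
      intro x
      have := ContinuousLinearMap.ext_iff.1 hcu x
      simpa only [ContinuousLinearMap.comp_apply] using this
    have hScomm_v : ∀ x : H, S ((V : H →L[ℂ] H) x) = (V : H →L[ℂ] H) (S x) := by
      intro x
      have := ContinuousLinearMap.ext_iff.1 hcv x
      simpa only [ContinuousLinearMap.comp_apply] using this
    refine ⟨?_, ?_, ?_⟩
    · -- positive definiteness
      intro n x ξ
      have hw : ⟪∑ j, ξ j • e (x j), S (∑ i, ξ i • e (x i))⟫_ℂ =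
          ∑ j, ∑ i, (starRingEnd ℂ) (ξ j) * (ξ i * ⟪e (x j), S (e (x i))⟫_ℂ) := by
        rw [map_sum, sum_inner]
        refine Finset.sum_congr rfl fun j _ => ?_
        rw [inner_smul_left, inner_sum, Finset.mul_sum]
        refine Finset.sum_congr rfl fun i _ => ?_
        rw [map_smul, inner_smul_right]
      have heq : (∑ i, ∑ j, ⟪e (x j), S (e (x i))⟫_ℂ * ξ i * (starRingEnd ℂ) (ξ j)) =
          ⟪∑ j, ξ j • e (x j), S (∑ i, ξ i • e (x i))⟫_ℂ := by
        rw [hw, Finset.sum_comm]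
        exact Finset.sum_congr rfl fun i _ => Finset.sum_congr rfl fun j _ => by ring
      rw [show (∑ i, ∑ j, (fun p q : ℤ × ℤ => ⟪e q, S (e p)⟫_ℂ) (x i) (x j) * ξ i *
          (starRingEnd ℂ) (ξ j)) = ∑ i, ∑ j, ⟪e (x j), S (e (x i))⟫_ℂ * ξ i *
          (starRingEnd ℂ) (ξ j) from rfl, heq]
      exact hSpos _
    · -- first covariance
      intro m n m' n'
      show ⟪e (m' + 1, n'), S (e (m + 1, n))⟫_ℂ = ⟪e (m', n'), S (e (m, n))⟫_ℂ
      rw [← hU_act m n, ← hU_act m' n', hScomm_u, GaborAux.inner_unitary_map U]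
    · -- second covariance
      intro m n m' n'
      show ⟪e (m', n' + 1), S (e (m, n + 1))⟫_ℂ =
        lam ^ (m - m') * ⟪e (m', n'), S (e (m, n))⟫_ℂ
      rw [hV_act' m n, hV_act' m' n', map_smul, inner_smul_left, inner_smul_right,
        hScomm_v, GaborAux.inner_unitary_map V, hconjzpow m', ← mul_assoc,
        ← zpow_add₀ hlam0, show -m' + m = m - m' by ring]
end
end

section
/- Let K be a positive definite map on a nonempty set X with Kolmogorov representation (H_K, v_K). Then the family {v_K(x) : x ∈ X} is a normalized tight frame for H_K if and only if for all finite families x_1,…,x_n ∈ X and ξ_1,…,ξ_n ∈ ℂ: ∑_{i,j=1}^n K(x_i,x_j) ξ_i conj(ξ_j) = ∑_{x ∈ X} |∑_{i=1}^n K(x_i,x) ξ_i|². -/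
open scoped InnerProductSpace ComplexOrder Classical
open Complex

noncomputable section

lemma my_minkowski {X : Type*} (S : Finset X) (a b : X → ℂ) :
    Real.sqrt (∑ y ∈ S, ‖a y + b y‖ ^ 2) ≤
      Real.sqrt (∑ y ∈ S, ‖a y‖ ^ 2) + Real.sqrt (∑ y ∈ S, ‖b y‖ ^ 2) := by
  let A : EuclideanSpace ℂ S := WithLp.toLp 2 (fun y => a y)
  let B : EuclideanSpace ℂ S := WithLp.toLp 2 (fun y => b y)
  have hA : ‖A‖ = Real.sqrt (∑ y ∈ S, ‖a y‖ ^ 2) := by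
    rw [EuclideanSpace.norm_eq]; congr 1
    rw [← Finset.sum_attach S fun y => ‖a y‖ ^ 2]; rfl
  have hB : ‖B‖ = Real.sqrt (∑ y ∈ S, ‖b y‖ ^ 2) := by
    rw [EuclideanSpace.norm_eq]; congr 1
    rw [← Finset.sum_attach S fun y => ‖b y‖ ^ 2]; rfl
  have hAB : ‖A + B‖ = Real.sqrt (∑ y ∈ S, ‖a y + b y‖ ^ 2) := by
    rw [EuclideanSpace.norm_eq]; congr 1
    rw [← Finset.sum_attach S fun y => ‖a y + b y‖ ^ 2]; rfl
  calc Real.sqrt (∑ y ∈ S, ‖a y + b y‖ ^ 2) = ‖A + B‖ := hAB.symm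
    _ ≤ ‖A‖ + ‖B‖ := norm_add_le A B
    _ = _ := by rw [hA, hB]

section Aux
variable {X : Type*} (K : X → X → ℂ)
    {H : Type*} [NormedAddCommGroup H] [InnerProductSpace ℂ H]
    (v : X → H) (hinner : ∀ x y : X, ⟪v y, v x⟫_ℂ = K x y)

include hinner in
lemma my_key_inner (n : ℕ) (x : Fin n → X) (ξ : Fin n → ℂ) (y : X) :
    ⟪v y, ∑ i, ξ i • v (x i)⟫_ℂ = ∑ i, K (x i) y * ξ i := by
  rw [inner_sum]
  refine Finset.sum_congr rfl fun i _ => ?_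
  rw [inner_smul_right, hinner]
  ring

include hinner in
lemma my_key_self (n : ℕ) (x : Fin n → X) (ξ : Fin n → ℂ) :
    ⟪∑ i, ξ i • v (x i), ∑ i, ξ i • v (x i)⟫_ℂ =
      ∑ i, ∑ j, K (x i) (x j) * ξ i * (starRingEnd ℂ) (ξ j) := by
  rw [sum_inner, Finset.sum_comm]
  refine Finset.sum_congr rfl fun i _ => ?_
  rw [inner_smul_left, my_key_inner K v hinner, Finset.mul_sum]
  refine Finset.sum_congr rfl fun j _ => ?_
  ring

end Aux

/-- `{v_K x : x ∈ X}` is a normalized tight frame for `H_K` iff the kernel satisfies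
`∑_{i,j} K(x_i,x_j) ξ_i conj ξ_j = ∑_{x ∈ X} |∑_i K(x_i,x) ξ_i|²`. -/
theorem ntf_iff_kernel_identity {X : Type*} [Nonempty X] (K : X → X → ℂ)
    (hK : IsPosDefKernel K)
    {H : Type*} [NormedAddCommGroup H] [InnerProductSpace ℂ H] [CompleteSpace H]
    (v : X → H) (hrep : IsKolmogorovRep K H v) :
    IsNormalizedTightFrame v ↔
      ∀ (n : ℕ) (x : Fin n → X) (ξ : Fin n → ℂ),
        ∑ i, ∑ j, K (x i) (x j) * ξ i * (starRingEnd ℂ) (ξ j) =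
          ((∑' y : X, ‖∑ i, K (x i) y * ξ i‖ ^ 2 : ℝ) : ℂ) := by
  obtain ⟨hdense, hinner⟩ := hrep
  constructor
  · intro hntf n x ξ
    have h1 : ∑ i, ∑ j, K (x i) (x j) * ξ i * (starRingEnd ℂ) (ξ j) =
        ⟪∑ i, ξ i • v (x i), ∑ i, ξ i • v (x i)⟫_ℂ :=
      (my_key_self K v hinner n x ξ).symm
    have h2 : ⟪∑ i, ξ i • v (x i), ∑ i, ξ i • v (x i)⟫_ℂ =
        ((‖∑ i, ξ i • v (x i)‖ ^ 2 : ℝ) : ℂ) := by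
      rw [inner_self_eq_norm_sq_to_K]; norm_cast
    have h3 : (∑' y : X, ‖∑ i, K (x i) y * ξ i‖ ^ 2 : ℝ) = ‖∑ i, ξ i • v (x i)‖ ^ 2 := by
      rw [← hntf (∑ i, ξ i • v (x i))]
      exact (tsum_congr fun y => by rw [my_key_inner K v hinner n x ξ y]).symm
    rw [h1, h2, h3]
  · intro hid
    -- HasSum on the span
    have span_hs : ∀ g ∈ Submodule.span ℂ (Set.range v),
        HasSum (fun y => ‖⟪v y, g⟫_ℂ‖ ^ 2) (‖g‖ ^ 2) := by
      intro g hg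
      rw [Submodule.mem_span_set'] at hg
      obtain ⟨n, ξ, w, rfl⟩ := hg
      choose x hx using fun i => (w i).2
      have hw : ∀ i, (w i : H) = v (x i) := fun i => (hx i).symm
      simp only [hw]
      have hF : (fun y => ‖⟪v y, ∑ i, ξ i • v (x i)⟫_ℂ‖ ^ 2) =
          fun y => ‖∑ i, K (x i) y * ξ i‖ ^ 2 := by
        funext y; rw [my_key_inner K v hinner]
      have hid' := hid n x ξ
      have hself : (((‖∑ i, ξ i • v (x i)‖ ^ 2 : ℝ)) : ℂ) =
          ∑ i, ∑ j, K (x i) (x j) * ξ i * (starRingEnd ℂ) (ξ j) := by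
        rw [← my_key_self K v hinner n x ξ, inner_self_eq_norm_sq_to_K]
        norm_cast
      have heq : (‖∑ i, ξ i • v (x i)‖ ^ 2 : ℝ) =
          ∑' y : X, ‖∑ i, K (x i) y * ξ i‖ ^ 2 := by
        have := hself.trans hid'
        exact_mod_cast this
      rw [hF]
      by_cases hs : Summable fun y : X => ‖∑ i, K (x i) y * ξ i‖ ^ 2
      · rw [heq]; exact hs.hasSum
      · exfalso
        rw [tsum_eq_zero_of_not_summable hs] at heq
        have hg0 : ∑ i, ξ i • v (x i) = 0 := by
          have : ‖∑ i, ξ i • v (x i)‖ = 0 := by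
            nlinarith [norm_nonneg (∑ i, ξ i • v (x i))]
          exact norm_eq_zero.mp this
        apply hs
        have : (fun y : X => ‖∑ i, K (x i) y * ξ i‖ ^ 2) = fun _ => (0 : ℝ) := by
          rw [← hF]; funext y; rw [hg0]; simp
        rw [this]; exact summable_zero
    -- Bessel bound for all f
    have bessel : ∀ (S : Finset X) (f : H), ∑ y ∈ S, ‖⟪v y, f⟫_ℂ‖ ^ 2 ≤ ‖f‖ ^ 2 := by
      intro S
      have hcl : IsClosed {f : H | ∑ y ∈ S, ‖⟪v y, f⟫_ℂ‖ ^ 2 ≤ ‖f‖ ^ 2} := by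
        apply isClosed_le
        · exact continuous_finset_sum S fun y _ =>
            ((continuous_const.inner continuous_id).norm.pow 2)
        · exact continuous_norm.pow 2
      have hsub : (↑(Submodule.span ℂ (Set.range v)) : Set H) ⊆
          {f : H | ∑ y ∈ S, ‖⟪v y, f⟫_ℂ‖ ^ 2 ≤ ‖f‖ ^ 2} := fun g hg =>
        sum_le_hasSum S (fun y _ => by positivity) (span_hs g hg)
      intro f
      have : f ∈ closure (↑(Submodule.span ℂ (Set.range v)) : Set H) := by
        rw [hdense.closure_eq]; trivial
      exact closure_minimal hsub hcl this
    have hsumm : ∀ f : H, Summable fun y : X => ‖⟪v y, f⟫_ℂ‖ ^ 2 := fun f =>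
      summable_of_sum_le (fun y => by positivity) (fun u => bessel u f)
    have hub : ∀ f : H, ∑' y, ‖⟪v y, f⟫_ℂ‖ ^ 2 ≤ ‖f‖ ^ 2 := fun f =>
      Summable.tsum_le_of_sum_le (hsumm f) (fun u => bessel u f)
    -- lower bound
    intro f
    have hBnn : 0 ≤ ∑' y, ‖⟪v y, f⟫_ℂ‖ ^ 2 := tsum_nonneg fun y => by positivity
    have hlow : ‖f‖ ≤ Real.sqrt (∑' y, ‖⟪v y, f⟫_ℂ‖ ^ 2) := by
      refine le_of_forall_pos_le_add fun ε hε => ?_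
      obtain ⟨g, hgmem, hgd⟩ := hdense.exists_dist_lt f (half_pos hε)
      have hgd' : ‖g - f‖ < ε / 2 := by
        rwa [dist_eq_norm, norm_sub_rev] at hgd
      set c := Real.sqrt (∑' y, ‖⟪v y, f⟫_ℂ‖ ^ 2) + ‖g - f‖ with hc
      have hcnn : 0 ≤ c := add_nonneg (Real.sqrt_nonneg _) (norm_nonneg _)
      have hSg : ∀ S : Finset X, ∑ y ∈ S, ‖⟪v y, g⟫_ℂ‖ ^ 2 ≤ c ^ 2 := by
        intro S
        have h1 : Real.sqrt (∑ y ∈ S, ‖⟪v y, g⟫_ℂ‖ ^ 2) ≤ c := by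
          have hmink := my_minkowski S (fun y => ⟪v y, f⟫_ℂ) (fun y => ⟪v y, g - f⟫_ℂ)
          have hfg : f + (g - f) = g := by abel
          have hsum_eq : ∑ y ∈ S, ‖⟪v y, f⟫_ℂ + ⟪v y, g - f⟫_ℂ‖ ^ 2 =
              ∑ y ∈ S, ‖⟪v y, g⟫_ℂ‖ ^ 2 :=
            Finset.sum_congr rfl fun y _ => by rw [← inner_add_right, hfg]
          rw [hsum_eq] at hmink
          refine hmink.trans (add_le_add ?_ ?_)
          · exact Real.sqrt_le_sqrt
              (Summable.sum_le_tsum S (fun y _ => by positivity) (hsumm f))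
          · calc Real.sqrt (∑ y ∈ S, ‖⟪v y, g - f⟫_ℂ‖ ^ 2)
                ≤ Real.sqrt (‖g - f‖ ^ 2) := Real.sqrt_le_sqrt (bessel S (g - f))
              _ = ‖g - f‖ := Real.sqrt_sq (norm_nonneg _)
        calc ∑ y ∈ S, ‖⟪v y, g⟫_ℂ‖ ^ 2
            = Real.sqrt (∑ y ∈ S, ‖⟪v y, g⟫_ℂ‖ ^ 2) ^ 2 := by
              rw [Real.sq_sqrt]; positivity
          _ ≤ c ^ 2 := by
              exact pow_le_pow_left₀ (Real.sqrt_nonneg _) h1 2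
      have hgle : ‖g‖ ≤ c := by
        have := ((span_hs g hgmem).tsum_eq)
        have hle : ‖g‖ ^ 2 ≤ c ^ 2 := by
          rw [← this]
          exact Summable.tsum_le_of_sum_le (span_hs g hgmem).summable hSg
        calc ‖g‖ = Real.sqrt (‖g‖ ^ 2) := by rw [Real.sqrt_sq (norm_nonneg _)]
          _ ≤ Real.sqrt (c ^ 2) := Real.sqrt_le_sqrt hle
          _ = c := Real.sqrt_sq hcnn
      calc ‖f‖ ≤ ‖g‖ + ‖f - g‖ := by
            rw [show f = g + (f - g) by abel]
            simpa using norm_add_le g (f - g)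
        _ ≤ c + ‖f - g‖ := by linarith
        _ = Real.sqrt (∑' y, ‖⟪v y, f⟫_ℂ‖ ^ 2) + ‖g - f‖ + ‖f - g‖ := by rw [hc]
        _ ≤ Real.sqrt (∑' y, ‖⟪v y, f⟫_ℂ‖ ^ 2) + ε := by
            rw [norm_sub_rev f g]; linarith
    have : ‖f‖ ^ 2 ≤ ∑' y, ‖⟪v y, f⟫_ℂ‖ ^ 2 := by
      calc ‖f‖ ^ 2 ≤ Real.sqrt (∑' y, ‖⟪v y, f⟫_ℂ‖ ^ 2) ^ 2 :=
            pow_le_pow_left₀ (norm_nonneg _) hlow 2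
        _ = _ := Real.sq_sqrt hBnn
    linarith [hub f]
end
end

section
/- Let K be a positive definite map on a nonempty set X whose Kolmogorov representation (H_K, v_K) is such that {v_K(x) : x ∈ X} is a normalized tight frame for H_K (i.e., K is NTF). Then K ≤ δ, where δ : X × X → ℂ is the diagonal kernel δ(x,y) = 1 if x = y and 0 otherwise; that is, for all finite families x_1,…,x_n ∈ X and ξ_1,…,ξ_n ∈ ℂ, ∑_{i,j=1}^n K(x_i,x_j) ξ_i conj(ξ_j) ≤ ∑_{i,j=1}^n δ(x_i,x_j) ξ_i conj(ξ_j). -/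
open scoped InnerProductSpace ComplexOrder Classical
open Complex

noncomputable section

/-- An NTF positive definite kernel is dominated by the diagonal kernel `δ`. -/
theorem ntf_kernel_le_delta {X : Type*} [Nonempty X] (K : X → X → ℂ)
    (hK : IsPosDefKernel K)
    {H : Type*} [NormedAddCommGroup H] [InnerProductSpace ℂ H] [CompleteSpace H]
    (v : X → H) (hrep : IsKolmogorovRep K H v) (hntf : IsNormalizedTightFrame v) :
    ∀ (n : ℕ) (x : Fin n → X) (ξ : Fin n → ℂ),
      ∑ i, ∑ j, K (x i) (x j) * ξ i * (starRingEnd ℂ) (ξ j) ≤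
        ∑ i, ∑ j, (if x i = x j then (1 : ℂ) else 0) * ξ i * (starRingEnd ℂ) (ξ j) := by
  intro n x ξ
  classical
  set f : H := ∑ i, ξ i • v (x i) with hf
  set T : Finset X := Finset.univ.image x with hT
  set η : X → ℂ := fun y => ∑ i ∈ Finset.univ.filter (fun i => x i = y), ξ i with hη
  have hmaps : ∀ i ∈ (Finset.univ : Finset (Fin n)), x i ∈ T := by
    intro i _; exact Finset.mem_image_of_mem x (Finset.mem_univ i)
  -- regroup f
  have hf2 : f = ∑ y ∈ T, η y • v y := by
    rw [hf, ← Finset.sum_fiberwise_of_maps_to hmaps (fun i => ξ i • v (x i))]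
    refine Finset.sum_congr rfl fun y _ => ?_
    rw [hη, Finset.sum_smul]
    refine Finset.sum_congr rfl fun i hi => ?_
    rw [(Finset.mem_filter.mp hi).2]
  -- LHS = ⟪f, f⟫
  have hL : (∑ i, ∑ j, K (x i) (x j) * ξ i * (starRingEnd ℂ) (ξ j)) = ⟪f, f⟫_ℂ := by
    rw [hf, sum_inner]
    rw [Finset.sum_comm]
    refine Finset.sum_congr rfl fun j _ => ?_
    rw [inner_smul_left, inner_sum]
    rw [Finset.mul_sum]
    refine Finset.sum_congr rfl fun i _ => ?_
    rw [inner_smul_right, hrep.2]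
    ring
  -- RHS = ∑ y in T, η y * conj (η y)
  have hR : (∑ i, ∑ j, (if x i = x j then (1 : ℂ) else 0) * ξ i * (starRingEnd ℂ) (ξ j))
      = ∑ y ∈ T, η y * (starRingEnd ℂ) (η y) := by
    have step1 : ∀ i : Fin n,
        (∑ j, (if x i = x j then (1 : ℂ) else 0) * ξ i * (starRingEnd ℂ) (ξ j))
          = ξ i * (starRingEnd ℂ) (η (x i)) := by
      intro i
      rw [hη, map_sum, Finset.mul_sum]
      rw [← Finset.sum_filter_of_ne (p := fun j => x j = x i)
        (f := fun j => (if x i = x j then (1 : ℂ) else 0) * ξ i * (starRingEnd ℂ) (ξ j))]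
      · refine Finset.sum_congr rfl fun j hj => ?_
        rw [if_pos ((Finset.mem_filter.mp hj).2.symm)]; ring
      · intro j _ hne
        by_cases h : x i = x j
        · exact h.symm
        · simp [h] at hne
    calc (∑ i, ∑ j, (if x i = x j then (1 : ℂ) else 0) * ξ i * (starRingEnd ℂ) (ξ j))
        = ∑ i, ξ i * (starRingEnd ℂ) (η (x i)) := Finset.sum_congr rfl fun i _ => step1 i
      _ = ∑ y ∈ T, ∑ i ∈ Finset.univ.filter (fun i => x i = y),
            ξ i * (starRingEnd ℂ) (η (x i)) :=
          (Finset.sum_fiberwise_of_maps_to hmaps _).symm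
      _ = ∑ y ∈ T, η y * (starRingEnd ℂ) (η y) := by
          refine Finset.sum_congr rfl fun y _ => ?_
          rw [hη, Finset.sum_mul]
          refine Finset.sum_congr rfl fun i hi => ?_
          rw [(Finset.mem_filter.mp hi).2]
  rw [hL, hR]
  -- real quantities
  set A : ℝ := ‖f‖ ^ 2 with hA
  set B : ℝ := ∑ y ∈ T, ‖η y‖ ^ 2 with hB
  have hterm : ∀ z : ℂ, z * (starRingEnd ℂ) z = ((‖z‖ ^ 2 : ℝ) : ℂ) := by
    intro z
    rw [Complex.mul_conj]
    norm_cast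
    rw [Complex.normSq_eq_norm_sq]
  have hRreal : (∑ y ∈ T, η y * (starRingEnd ℂ) (η y)) = (B : ℂ) := by
    rw [hB]
    push_cast
    refine Finset.sum_congr rfl fun y _ => ?_
    rw [hterm (η y)]
    push_cast
    ring
  have hLreal : ⟪f, f⟫_ℂ = (A : ℂ) := by
    rw [inner_self_eq_norm_sq_to_K, hA]; norm_cast
  rw [hLreal, hRreal, Complex.real_le_real]
  have hBnn : 0 ≤ B := Finset.sum_nonneg fun y _ => sq_nonneg _
  have hAnn : 0 ≤ A := sq_nonneg _
  -- key estimate via NTF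
  by_cases hsum : Summable fun y : X => ‖⟪v y, f⟫_ℂ‖ ^ 2
  · set C : ℝ := ∑ y ∈ T, ‖⟪v y, f⟫_ℂ‖ ^ 2 with hC
    have hCA : C ≤ A := by
      rw [hC, hA, ← hntf f]
      exact Summable.sum_le_tsum T (fun y _ => sq_nonneg _) hsum
    have hCS : A ^ 2 ≤ B * C := by
      have h1 : A = Complex.re ⟪f, f⟫_ℂ := by
        rw [hLreal]; simp
      have h2 : ⟪f, f⟫_ℂ = ∑ y ∈ T, (starRingEnd ℂ) (η y) * ⟪v y, f⟫_ℂ := by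
        calc ⟪f, f⟫_ℂ = ⟪∑ y ∈ T, η y • v y, f⟫_ℂ := by rw [← hf2]
          _ = _ := by
              rw [sum_inner]
              exact Finset.sum_congr rfl fun y _ => inner_smul_left _ _ _
      have h3 : A ≤ ∑ y ∈ T, ‖η y‖ * ‖⟪v y, f⟫_ℂ‖ := by
        rw [h1, h2]
        calc Complex.re (∑ y ∈ T, (starRingEnd ℂ) (η y) * ⟪v y, f⟫_ℂ)
            ≤ ‖∑ y ∈ T, (starRingEnd ℂ) (η y) * ⟪v y, f⟫_ℂ‖ := Complex.re_le_norm _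
          _ ≤ ∑ y ∈ T, ‖(starRingEnd ℂ) (η y) * ⟪v y, f⟫_ℂ‖ := norm_sum_le _ _
          _ = ∑ y ∈ T, ‖η y‖ * ‖⟪v y, f⟫_ℂ‖ := by
              refine Finset.sum_congr rfl fun y _ => ?_
              rw [norm_mul, RCLike.norm_conj]
      calc A ^ 2 ≤ (∑ y ∈ T, ‖η y‖ * ‖⟪v y, f⟫_ℂ‖) ^ 2 := by
            have hs : 0 ≤ ∑ y ∈ T, ‖η y‖ * ‖⟪v y, f⟫_ℂ‖ :=
              Finset.sum_nonneg fun y _ => mul_nonneg (norm_nonneg _) (norm_nonneg _)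
            exact pow_le_pow_left₀ hAnn h3 2
        _ ≤ B * C := by
            rw [hB, hC]
            exact Finset.sum_mul_sq_le_sq_mul_sq T _ _
    have hCnn : 0 ≤ C := Finset.sum_nonneg fun y _ => sq_nonneg _
    nlinarith [hCS, hCA, hAnn, hBnn, hCnn]
  · have h0 : A = 0 := by
      rw [hA, ← hntf f, tsum_eq_zero_of_not_summable hsum]
    rw [h0]; exact hBnn
end
end

section
/- Let X be a countable nonempty set and let K, K' be NTF positive definite maps on X with Kolmogorov representations (H_K, v_K) and (H_{K'}, v_{K'}), and suppose K ≤ cK' for some c > 0. Then there exists an isometry W : H_K → H_{K'} induced by K, i.e., ⟨W v_K(x), v_{K'}(y)⟩ = K(x,y) for all x, y ∈ X; moreover the orthogonal projection P of H_{K'} onto the range of W is also induced by K, i.e., ⟨P v_{K'}(x), v_{K'}(y)⟩ = K(x,y) for all x, y ∈ X, and P v_{K'}(x) = W v_K(x) for all x ∈ X. -/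
open scoped InnerProductSpace ComplexOrder Classical
open Complex

noncomputable section

private lemma sum_equiv_fin {X : Type*} {E : Type*} [AddCommMonoid E] (s : Finset X)
    (f : X → E) :
    ∑ i : Fin s.card, f (s.equivFin.symm i : X) = ∑ x ∈ s, f x := by
  rw [← Finset.sum_coe_sort s f]
  exact Equiv.sum_comp s.equivFin.symm fun a => f (a : X)

private lemma quad_eq {X : Type*} {H : Type*} [NormedAddCommGroup H] [InnerProductSpace ℂ H]
    (v : X → H) (K : X → X → ℂ) (hK : ∀ x y, ⟪v y, v x⟫_ℂ = K x y)
    (n : ℕ) (x : Fin n → X) (ξ : Fin n → ℂ) :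
    ∑ i, ∑ j, K (x i) (x j) * ξ i * (starRingEnd ℂ) (ξ j)
      = ⟪∑ j, ξ j • v (x j), ∑ i, ξ i • v (x i)⟫_ℂ := by
  rw [sum_inner, Finset.sum_comm]
  refine Finset.sum_congr rfl fun j _ => ?_
  rw [inner_sum]
  refine Finset.sum_congr rfl fun i _ => ?_
  rw [inner_smul_left, inner_smul_right, hK]
  ring

theorem ntf_dilation' {X : Type*} [Nonempty X] [Countable X] (K K' : X → X → ℂ)
    {H : Type*} [NormedAddCommGroup H] [InnerProductSpace ℂ H] [CompleteSpace H]
    {H' : Type*} [NormedAddCommGroup H'] [InnerProductSpace ℂ H'] [CompleteSpace H']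
    (v : X → H) (v' : X → H')
    (hrep : Dense (↑(Submodule.span ℂ (Set.range v)) : Set H) ∧ ∀ x y : X, ⟪v y, v x⟫_ℂ = K x y)
    (hrep' : Dense (↑(Submodule.span ℂ (Set.range v')) : Set H') ∧ ∀ x y : X, ⟪v' y, v' x⟫_ℂ = K' x y)
    (hntf : ∀ f : H, ∑' i, ‖⟪v i, f⟫_ℂ‖ ^ 2 = ‖f‖ ^ 2)
    (hntf' : ∀ f : H', ∑' i, ‖⟪v' i, f⟫_ℂ‖ ^ 2 = ‖f‖ ^ 2)
    (c : ℝ) (hc : 0 < c)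
    (hle : ∀ (n : ℕ) (x : Fin n → X) (ξ : Fin n → ℂ),
      ∑ i, ∑ j, K (x i) (x j) * ξ i * (starRingEnd ℂ) (ξ j) ≤
        (c : ℂ) * ∑ i, ∑ j, K' (x i) (x j) * ξ i * (starRingEnd ℂ) (ξ j)) :
    ∃ W : H →ₗᵢ[ℂ] H',
      (∀ x y : X, ⟪v' y, W (v x)⟫_ℂ = K x y) ∧
      ∀ P : H' →L[ℂ] H',
        ((∀ u, P (P u) = P u) ∧ (∀ u w : H', ⟪P u, w⟫_ℂ = ⟪u, P w⟫_ℂ) ∧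
          Set.range P = Set.range W) →
        (∀ x y : X, ⟪v' y, P (v' x)⟫_ℂ = K x y) ∧ ∀ x : X, P (v' x) = W (v x) := by
  -- the key finite-sum inequality
  have key : ∀ (s : Finset X) (ξ : X → ℂ),
      ‖∑ x ∈ s, ξ x • v x‖ ≤ Real.sqrt c * ‖∑ x ∈ s, ξ x • v' x‖ := by
    intro s ξ
    set n := s.card
    let e : Fin n ≃ ↥s := s.equivFin.symm
    have h := hle n (fun i => (e i : X)) (fun i => ξ (e i : X))
    rw [quad_eq v K hrep.2, quad_eq v' K' hrep'.2,
      sum_equiv_fin s (fun x => ξ x • v x), sum_equiv_fin s (fun x => ξ x • v' x)] at h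
    have h2 : ‖∑ x ∈ s, ξ x • v x‖ ^ 2 ≤ c * ‖∑ x ∈ s, ξ x • v' x‖ ^ 2 := by
      have := (Complex.le_def.mp h).1
      rw [inner_self_eq_norm_sq_to_K, inner_self_eq_norm_sq_to_K] at this
      simpa [← Complex.ofReal_pow, Complex.ofReal_re] using this
    have h3 : (Real.sqrt c * ‖∑ x ∈ s, ξ x • v' x‖) ^ 2 = c * ‖∑ x ∈ s, ξ x • v' x‖ ^ 2 := by
      rw [mul_pow, Real.sq_sqrt hc.le]
    calc ‖∑ x ∈ s, ξ x • v x‖ = Real.sqrt (‖∑ x ∈ s, ξ x • v x‖ ^ 2) :=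
          (Real.sqrt_sq (norm_nonneg _)).symm
      _ ≤ Real.sqrt ((Real.sqrt c * ‖∑ x ∈ s, ξ x • v' x‖) ^ 2) :=
          Real.sqrt_le_sqrt (by rw [h3]; exact h2)
      _ = Real.sqrt c * ‖∑ x ∈ s, ξ x • v' x‖ := Real.sqrt_sq (by positivity)
  -- free module maps
  set φ : (X →₀ ℂ) →ₗ[ℂ] H := Finsupp.linearCombination ℂ v with hφ
  set φ' : (X →₀ ℂ) →ₗ[ℂ] H' := Finsupp.linearCombination ℂ v' with hφ'
  have happ : ∀ ξ : X →₀ ℂ, φ ξ = ∑ x ∈ ξ.support, ξ x • v x := fun ξ =>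
    Finsupp.linearCombination_apply_of_mem_supported ℂ (Finsupp.mem_supported_support _ ξ)
  have happ' : ∀ ξ : X →₀ ℂ, φ' ξ = ∑ x ∈ ξ.support, ξ x • v' x := fun ξ =>
    Finsupp.linearCombination_apply_of_mem_supported ℂ (Finsupp.mem_supported_support _ ξ)
  have keyφ : ∀ ξ : X →₀ ℂ, ‖φ ξ‖ ≤ Real.sqrt c * ‖φ' ξ‖ := by
    intro ξ; rw [happ, happ']; exact key _ _
  have hker : LinearMap.ker φ' ≤ LinearMap.ker φ := by
    intro ξ hξ
    rw [LinearMap.mem_ker] at hξ ⊢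
    have := keyφ ξ
    rw [hξ, norm_zero, mul_zero] at this
    exact norm_le_zero_iff.mp this
  -- the bounded operator on the range of φ'
  set p' : Submodule ℂ H' := LinearMap.range φ' with hp'
  let T₀ : p' →ₗ[ℂ] H :=
    (Submodule.liftQ (LinearMap.ker φ') φ hker).comp (φ'.quotKerEquivRange.symm : p' →ₗ[ℂ] _)
  have hT₀ : ∀ ξ : X →₀ ℂ, T₀ ⟨φ' ξ, LinearMap.mem_range_self φ' ξ⟩ = φ ξ := by
    intro ξ
    have h1 : (φ'.quotKerEquivRange (Submodule.Quotient.mk ξ) : H') = φ' ξ :=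
      LinearMap.quotKerEquivRange_apply_mk φ' ξ
    have h2 : φ'.quotKerEquivRange.symm ⟨φ' ξ, LinearMap.mem_range_self φ' ξ⟩
        = Submodule.Quotient.mk ξ := by
      apply φ'.quotKerEquivRange.injective
      simp only [LinearEquiv.apply_symm_apply]
      exact Subtype.ext h1.symm
    simp only [T₀, LinearMap.comp_apply, LinearEquiv.coe_coe, h2]
    rfl
  have hT₀bound : ∀ u : p', ‖T₀ u‖ ≤ Real.sqrt c * ‖u‖ := by
    rintro ⟨u, hu⟩
    obtain ⟨ξ, rfl⟩ := hu
    rw [hT₀]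
    exact keyφ ξ
  let T₁ : p' →L[ℂ] H := T₀.mkContinuous (Real.sqrt c) hT₀bound
  -- extend to all of H'
  have hdense : DenseRange (p'.subtypeL : p' →L[ℂ] H') := by
    have hsp : Submodule.span ℂ (Set.range v') = p' := (Finsupp.range_linearCombination ℂ).symm
    have : Dense (↑p' : Set H') := hsp ▸ hrep'.1
    simpa [DenseRange, Set.range, Subtype.range_coe] using this
  have hind : IsUniformInducing (p'.subtypeL : p' →L[ℂ] H') :=
    p'.subtypeₗᵢ.isometry.isUniformInducing
  let T : H' →L[ℂ] H := T₁.extend p'.subtypeL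
  have hT : ∀ x : X, T (v' x) = v x := by
    intro x
    have hmem : v' x ∈ p' := by
      refine ⟨Finsupp.single x 1, ?_⟩
      simp [hφ']
    have h1 : T (v' x) = T₁ ⟨v' x, hmem⟩ :=
      ContinuousLinearMap.extend_eq T₁ hdense hind ⟨v' x, hmem⟩
    rw [h1]
    have h2 : (⟨v' x, hmem⟩ : p') = ⟨φ' (Finsupp.single x 1),
        LinearMap.mem_range_self φ' (Finsupp.single x 1)⟩ := by
      apply Subtype.ext; simp [hφ']
    show T₀ _ = _
    rw [h2, hT₀]
    simp [hφ]
  -- the adjoint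
  set A : H →L[ℂ] H' := ContinuousLinearMap.adjoint T with hA
  have hAinner : ∀ (f : H) (x : X), ⟪v' x, A f⟫_ℂ = ⟪v x, f⟫_ℂ := by
    intro f x
    rw [hA, ContinuousLinearMap.adjoint_inner_right, hT]
  have hAnorm : ∀ f : H, ‖A f‖ = ‖f‖ := by
    intro f
    have h1 : ∑' x, ‖⟪v' x, A f⟫_ℂ‖ ^ 2 = ‖A f‖ ^ 2 := hntf' (A f)
    have h2 : ∑' x, ‖⟪v' x, A f⟫_ℂ‖ ^ 2 = ∑' x, ‖⟪v x, f⟫_ℂ‖ ^ 2 := by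
      congr 1; ext x; rw [hAinner]
    have h3 : ‖A f‖ ^ 2 = ‖f‖ ^ 2 := by rw [← h1, h2, hntf]
    nlinarith [norm_nonneg (A f), norm_nonneg f]
  refine ⟨⟨A.toLinearMap, hAnorm⟩, ?_, ?_⟩
  · intro x y
    have : ⟪A (v x), v' y⟫_ℂ = ⟪v x, v y⟫_ℂ := by
      rw [hA, ContinuousLinearMap.adjoint_inner_left, hT]
    calc ⟪v' y, A (v x)⟫_ℂ = (starRingEnd ℂ) ⟪A (v x), v' y⟫_ℂ := (inner_conj_symm _ _).symm
      _ = (starRingEnd ℂ) ⟪v x, v y⟫_ℂ := by rw [this]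
      _ = ⟪v y, v x⟫_ℂ := inner_conj_symm _ _
      _ = K x y := hrep.2 x y
  · rintro P ⟨hidem, hsym, hrange⟩
    set W : H →ₗᵢ[ℂ] H' := ⟨A.toLinearMap, hAnorm⟩ with hW
    have hWA : ∀ f, W f = A f := fun f => rfl
    have hfix : ∀ u : H', u ∈ Set.range P → P u = u := by
      rintro u ⟨w, rfl⟩
      exact hidem w
    have hPvx : ∀ x : X, P (v' x) = W (v x) := by
      intro x
      have hmem : P (v' x) ∈ Set.range W := hrange ▸ Set.mem_range_self (v' x)
      obtain ⟨g, hg⟩ := hmem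
      have hgvx : g = v x := by
        apply ext_inner_left ℂ
        intro f
        have hWfP : P (W f) = W f := hfix _ (hrange ▸ Set.mem_range_self f)
        calc ⟪f, g⟫_ℂ = ⟪W f, W g⟫_ℂ := (W.inner_map_map f g).symm
          _ = ⟪W f, P (v' x)⟫_ℂ := by rw [hg]
          _ = ⟪P (W f), v' x⟫_ℂ := (hsym (W f) (v' x)).symm ▸ (hsym (W f) (v' x))
          _ = ⟪W f, v' x⟫_ℂ := by rw [hWfP]
          _ = ⟪f, v x⟫_ℂ := by
              rw [hWA, hA, ContinuousLinearMap.adjoint_inner_left, hT]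
      rw [← hg, hgvx]
    refine ⟨?_, hPvx⟩
    intro x y
    rw [hPvx x]
    calc ⟪v' y, W (v x)⟫_ℂ = (starRingEnd ℂ) ⟪W (v x), v' y⟫_ℂ := (inner_conj_symm _ _).symm
      _ = (starRingEnd ℂ) ⟪v x, v y⟫_ℂ := by
          rw [hWA, hA, ContinuousLinearMap.adjoint_inner_left, hT]
      _ = ⟪v y, v x⟫_ℂ := inner_conj_symm _ _
      _ = K x y := hrep.2 x y

/-- If `K, K'` are NTF positive definite kernels on a countable set with `K ≤ c K'`, then
there is an isometry `W : H_K → H_{K'}` induced by `K`, and the orthogonal projection onto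
its range is also induced by `K`. -/
theorem ntf_dilation {X : Type*} [Nonempty X] [Countable X] (K K' : X → X → ℂ)
    (hK : IsPosDefKernel K) (hK' : IsPosDefKernel K')
    {H : Type*} [NormedAddCommGroup H] [InnerProductSpace ℂ H] [CompleteSpace H]
    {H' : Type*} [NormedAddCommGroup H'] [InnerProductSpace ℂ H'] [CompleteSpace H']
    (v : X → H) (v' : X → H')
    (hrep : IsKolmogorovRep K H v) (hrep' : IsKolmogorovRep K' H' v')
    (hntf : IsNormalizedTightFrame v) (hntf' : IsNormalizedTightFrame v')
    (c : ℝ) (hc : 0 < c) (hle : KernelLE K K' c) :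
    ∃ W : H →ₗᵢ[ℂ] H',
      (∀ x y : X, ⟪v' y, W (v x)⟫_ℂ = K x y) ∧
      ∀ P : H' →L[ℂ] H', IsOrthProjectionOnto P (Set.range W) →
        (∀ x y : X, ⟪v' y, P (v' x)⟫_ℂ = K x y) ∧ ∀ x : X, P (v' x) = W (v x) := by
  obtain ⟨W, h1, h2⟩ := ntf_dilation' K K' v v' hrep hrep' hntf hntf' c hc hle
  exact ⟨W, h1, fun P hP => h2 P ⟨hP.1, hP.2.1, hP.2.2⟩⟩
end
end

section
/- Dilation of group frames: Let G be a countable group, let π be a unitary representation of G on a complex Hilbert space H, and let η ∈ H be such that {π(g)η : g ∈ G} is a normalized tight frame for H. Then there exist a complex Hilbert space H₁, an isometric linear embedding W : H → H₁, a unitary representation π₁ of G on H₁, and a vector ξ ∈ H₁ such that: (i) {π₁(g)ξ : g ∈ G} is an orthonormal basis of H₁; (ii) W π(g) = π₁(g) W for all g ∈ G; (iii) the orthogonal projection P of H₁ onto the range of W commutes with π₁(g) for all g ∈ G; (iv) P ξ = W η. In particular, P π₁(g) ξ = W π(g) η for all g ∈ G, so the normalized tight frame {π(g)η} dilates to the orthonormal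 basis {π₁(g)ξ}. -/
open scoped InnerProductSpace ComplexOrder Classical
open Complex

noncomputable section

universe u

open scoped ENNReal
open scoped lp

set_option linter.unusedSectionVars false

lemma memℓp_comp_equiv {ι : Type u} (e : ι ≃ ι) (u : ℓ²(ι, ℂ)) :
    Memℓp (fun i => u (e i)) 2 := by
  apply memℓp_gen
  have h := lp.memℓp u
  rw [memℓp_gen_iff (by norm_num)] at h
  exact (e.summable_iff (f := fun i => ‖u i‖ ^ (2 : ℝ≥0∞).toReal)).2 h

def lpTransL {ι : Type u} (e : ι ≃ ι) : ℓ²(ι, ℂ) →ₗ[ℂ] ℓ²(ι, ℂ) where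
  toFun u := ⟨fun i => u (e i), memℓp_comp_equiv e u⟩
  map_add' u v := by ext i; simp [lp.coeFn_add, Pi.add_apply]; rfl
  map_smul' c u := by ext i; simp [lp.coeFn_smul]

@[simp] lemma lpTransL_apply {ι : Type u} (e : ι ≃ ι) (u : ℓ²(ι, ℂ)) (i : ι) :
    (lpTransL e u : ∀ _ : ι, ℂ) i = u (e i) := rfl

lemma norm_lpTransL {ι : Type u} (e : ι ≃ ι) (u : ℓ²(ι, ℂ)) :
    ‖lpTransL e u‖ = ‖u‖ := by
  have h2 : (0:ℝ) < (2 : ℝ≥0∞).toReal := by norm_num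
  have key : ‖lpTransL e u‖ ^ (2 : ℝ≥0∞).toReal = ‖u‖ ^ (2 : ℝ≥0∞).toReal := by
    rw [lp.norm_rpow_eq_tsum h2, lp.norm_rpow_eq_tsum h2]
    exact e.tsum_eq (f := fun i => ‖u i‖ ^ (2 : ℝ≥0∞).toReal)
  exact Real.rpow_left_injOn (ne_of_gt h2) (norm_nonneg _) (norm_nonneg _) key

def lpTrans {ι : Type u} (e : ι ≃ ι) : ℓ²(ι, ℂ) ≃ₗᵢ[ℂ] ℓ²(ι, ℂ) :=
  { LinearEquiv.ofLinear (re₁₂ := RingHomInvPair.ids) (re₂₁ := RingHomInvPair.ids)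
      (lpTransL e.symm) (lpTransL e)
      (by ext u i; simp) (by ext u i; simp) with
    norm_map' := norm_lpTransL e.symm }

@[simp] lemma lpTrans_apply {ι : Type u} (e : ι ≃ ι) (u : ℓ²(ι, ℂ)) (i : ι) :
    (lpTrans e u : ∀ _ : ι, ℂ) i = u (e.symm i) := rfl

def regRep (G : Type u) [Group G] : G →* (ℓ²(G, ℂ) ≃ₗᵢ[ℂ] ℓ²(G, ℂ)) where
  toFun g := lpTrans (Equiv.mulLeft g)
  map_one' := by
    apply LinearIsometryEquiv.ext
    intro u; apply lp.ext; funext i; simp [Equiv.Perm.one_symm, Equiv.Perm.one_apply]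
  map_mul' g g' := by
    apply LinearIsometryEquiv.ext
    intro u; apply lp.ext; funext i
    have : ((lpTrans (Equiv.mulLeft g) * lpTrans (Equiv.mulLeft g')) u : ∀ _ : G, ℂ) i
        = (lpTrans (Equiv.mulLeft g) (lpTrans (Equiv.mulLeft g') u) : ∀ _ : G, ℂ) i := rfl
    rw [this]
    simp [mul_assoc, Equiv.Perm.mul_def]

@[simp] lemma regRep_apply {G : Type u} [Group G] (g : G) (u : ℓ²(G, ℂ)) (i : G) :
    (regRep G g u : ∀ _ : G, ℂ) i = u (g⁻¹ * i) := rfl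

section W
variable {G : Type u} [Group G] {H : Type u} [NormedAddCommGroup H] [InnerProductSpace ℂ H]
  [CompleteSpace H] (π : G →* (H ≃ₗᵢ[ℂ] H)) (η : H)

lemma frame_summable (hframe : IsNormalizedTightFrame fun g : G => π g η) (f : H) :
    Summable fun g : G => ‖⟪π g η, f⟫_ℂ‖ ^ (2 : ℝ≥0∞).toReal := by
  have h2 : (2 : ℝ≥0∞).toReal = ((2 : ℕ) : ℝ) := by norm_num
  simp only [h2, Real.rpow_natCast]
  by_cases hf : f = 0
  · subst hf; simp only [inner_zero_right, norm_zero]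
    simpa using summable_zero
  · by_contra hs
    have := tsum_eq_zero_of_not_summable hs
    rw [hframe f] at this
    have : ‖f‖ = 0 := pow_eq_zero_iff two_ne_zero |>.1 this
    exact hf (norm_eq_zero.1 this)

lemma frame_memℓp (hframe : IsNormalizedTightFrame fun g : G => π g η) (f : H) :
    Memℓp (fun g : G => ⟪π g η, f⟫_ℂ) 2 :=
  memℓp_gen (frame_summable π η hframe f)

def frameW (hframe : IsNormalizedTightFrame fun g : G => π g η) : H →ₗᵢ[ℂ] ℓ²(G, ℂ) where
  toLinearMap :=
    { toFun := fun f => ⟨fun g => ⟪π g η, f⟫_ℂ, frame_memℓp π η hframe f⟩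
      map_add' := fun f₁ f₂ => by ext g; simp [lp.coeFn_add, inner_add_right, Pi.add_apply]; rfl
      map_smul' := fun c f => by ext g; simp [lp.coeFn_smul, inner_smul_right] }
  norm_map' := fun f => by
    have h2 : (0:ℝ) < (2 : ℝ≥0∞).toReal := by norm_num
    have key : ‖(⟨fun g => ⟪π g η, f⟫_ℂ, frame_memℓp π η hframe f⟩ : ℓ²(G, ℂ))‖
        ^ (2 : ℝ≥0∞).toReal = ‖f‖ ^ (2 : ℝ≥0∞).toReal := by
      rw [lp.norm_rpow_eq_tsum h2]
      have h2' : (2 : ℝ≥0∞).toReal = ((2 : ℕ) : ℝ) := by norm_num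
      simp only [h2', Real.rpow_natCast]
      exact hframe f
    exact Real.rpow_left_injOn (ne_of_gt h2) (norm_nonneg _) (norm_nonneg _) key

@[simp] lemma frameW_apply (hframe : IsNormalizedTightFrame fun g : G => π g η) (f : H) (g : G) :
    (frameW π η hframe f : ∀ _ : G, ℂ) g = ⟪π g η, f⟫_ℂ := rfl

end W


/-- **Dilation of group frames.** A normalized tight frame generated by a unitary
representation of a countable group dilates to an orthonormal basis generated by a unitary
representation of the same group. -/
theorem group_frame_dilation {G : Type u} [Group G] [Countable G]
    {H : Type u} [NormedAddCommGroup H] [InnerProductSpace ℂ H] [CompleteSpace H]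
    (π : G →* (H ≃ₗᵢ[ℂ] H)) (η : H)
    (hframe : IsNormalizedTightFrame fun g : G => π g η) :
    ∃ (H₁ : Type u) (_ : NormedAddCommGroup H₁) (_ : InnerProductSpace ℂ H₁)
      (_ : CompleteSpace H₁) (W : H →ₗᵢ[ℂ] H₁) (π₁ : G →* (H₁ ≃ₗᵢ[ℂ] H₁)) (ξ : H₁),
      (Orthonormal ℂ (fun g : G => π₁ g ξ) ∧
        Dense (↑(Submodule.span ℂ (Set.range fun g : G => π₁ g ξ)) : Set H₁)) ∧
      (∀ (g : G) (x : H), W (π g x) = π₁ g (W x)) ∧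
      (∀ P : H₁ →L[ℂ] H₁, IsOrthProjectionOnto P (Set.range W) →
        (∀ (g : G) (w : H₁), P (π₁ g w) = π₁ g (P w)) ∧
        P ξ = W η ∧
        ∀ g : G, P (π₁ g ξ) = W (π g η)) := by
  classical
  set W := frameW π η hframe with hW
  set π₁ := regRep G with hπ₁
  set ξ : ℓ²(G, ℂ) := lp.single 2 (1 : G) (1 : ℂ) with hξ
  -- π₁ g ξ = single g 1
  have hsingle : ∀ g : G, π₁ g ξ = lp.single 2 g (1 : ℂ) := by
    intro g
    apply lp.ext; funext i
    rw [regRep_apply]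
    by_cases h : i = g
    · subst h
      show (lp.single 2 (1:G) (1:ℂ) : ∀ _ : G, ℂ) (i⁻¹ * i) = _
      rw [inv_mul_cancel, lp.single_apply_self, lp.single_apply_self]
    · show (lp.single 2 (1:G) (1:ℂ) : ∀ _ : G, ℂ) (g⁻¹ * i) = _
      rw [lp.single_apply_ne _ _ _ (fun hh => h ((inv_mul_eq_one.1 hh).symm)),
        lp.single_apply_ne _ _ _ h]
  -- covariance
  have hπmul : ∀ (g g' : G) (x : H), π g (π g' x) = π (g * g') x := by
    intro g g' x; rw [map_mul]; rfl
  have hπ₁mul : ∀ (g g' : G) (u : ℓ²(G, ℂ)), π₁ g (π₁ g' u) = π₁ (g * g') u := by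
    intro g g' u; rw [map_mul]; rfl
  have hcov : ∀ (g : G) (x : H), W (π g x) = π₁ g (W x) := by
    intro g x
    apply lp.ext; funext h
    rw [hW]
    show ⟪π h η, π g x⟫_ℂ = (π₁ g (W x) : ∀ _ : G, ℂ) h
    rw [hπ₁, regRep_apply, hW, frameW_apply]
    have : π h η = π g (π (g⁻¹ * h) η) := by rw [hπmul]; simp
    rw [this, LinearIsometryEquiv.inner_map_map]
  refine ⟨ℓ²(G, ℂ), inferInstance, inferInstance, inferInstance, W, π₁, ξ, ⟨?_, ?_⟩, hcov, ?_⟩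
  · -- orthonormal
    rw [orthonormal_iff_ite]
    intro g g'
    rw [hsingle, hsingle, lp.inner_single_left]
    by_cases h : g = g'
    · subst h
      rw [if_pos rfl, lp.single_apply_self]
      simp
    · rw [if_neg h, lp.single_apply_ne _ _ _ h]
      simp
  · -- dense
    have heq : (Set.range fun g : G => π₁ g ξ) = Set.range fun g : G => lp.single 2 g (1 : ℂ) := by
      simp only [hsingle]
    rw [heq]
    rw [dense_iff_closure_eq, Set.eq_univ_iff_forall]
    intro f
    have hsum := lp.hasSum_single ENNReal.ofNat_ne_top f
    refine mem_closure_of_tendsto hsum (Filter.Eventually.of_forall fun s => ?_)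
    refine Submodule.sum_mem _ fun i _ => ?_
    have : lp.single (E := fun _ : G => ℂ) 2 i (f i) = f i • lp.single 2 i (1 : ℂ) := by
      rw [← lp.single_smul]; norm_num
    rw [this]
    exact Submodule.smul_mem _ _ (Submodule.subset_span ⟨i, rfl⟩)
  · -- projection part
    rintro P ⟨hP1, hP2, hP3⟩
    have hfix : ∀ s ∈ Set.range ⇑W, P s = s := by
      intro s hs
      rw [← hP3] at hs
      obtain ⟨w, rfl⟩ := hs
      exact hP1 w
    have hker : ∀ (v : ℓ²(G, ℂ)), ∀ s ∈ Set.range ⇑W, ⟪v - P v, s⟫_ℂ = 0 := by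
      intro v s hs
      rw [← hfix s hs, ← hP2, map_sub, hP1, sub_self, inner_zero_left]
    have huniq : ∀ v w : ℓ²(G, ℂ), w ∈ Set.range ⇑W →
        (∀ s ∈ Set.range ⇑W, ⟪v - w, s⟫_ℂ = 0) → P v = w := by
      intro v w hw horth
      have hPv : P v ∈ Set.range ⇑W := hP3 ▸ Set.mem_range_self v
      obtain ⟨fv, hfv⟩ := hPv
      obtain ⟨fw, hfw⟩ := hw
      have hmem : P v - w ∈ Set.range ⇑W := ⟨fv - fw, by rw [map_sub, hfv, hfw]⟩
      have h0 : ⟪P v - w, P v - w⟫_ℂ = 0 := by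
        have e1 : ⟪v - P v, P v - w⟫_ℂ = 0 := hker v _ hmem
        have e2 : ⟪v - w, P v - w⟫_ℂ = 0 := horth _ hmem
        have e3 : ⟪P v - w, P v - w⟫_ℂ = ⟪v - w, P v - w⟫_ℂ - ⟪v - P v, P v - w⟫_ℂ := by
          rw [← inner_sub_left]; congr 1; abel
        rw [e3, e1, e2, sub_zero]
      exact sub_eq_zero.1 (inner_self_eq_zero.1 h0)
    have hcomm : ∀ (g : G) (w : ℓ²(G, ℂ)), P (π₁ g w) = π₁ g (P w) := by
      intro g w
      apply huniq
      · obtain ⟨x, hx⟩ : P w ∈ Set.range ⇑W := hP3 ▸ Set.mem_range_self w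
        exact ⟨π g x, by rw [hcov, hx]⟩
      · rintro s ⟨f, rfl⟩
        have hs : W f = π₁ g (W (π g⁻¹ f)) := by rw [← hcov, hπmul]; simp
        rw [hs, ← map_sub, LinearIsometryEquiv.inner_map_map]
        exact hker w _ ⟨π g⁻¹ f, rfl⟩
    have hPξ : P ξ = W η := by
      apply huniq
      · exact ⟨η, rfl⟩
      · rintro s ⟨f, rfl⟩
        rw [inner_sub_left, LinearIsometry.inner_map_map]
        have e : ⟪ξ, W f⟫_ℂ = ⟪η, f⟫_ℂ := by
          rw [hξ, lp.inner_single_left]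
          show ⟪(1:ℂ), (W f : ∀ _ : G, ℂ) (1 : G)⟫_ℂ = _
          rw [hW, frameW_apply]
          simp
        rw [e, sub_self]
    exact ⟨hcomm, hPξ, fun g => by rw [hcomm, hPξ, ← hcov]⟩
end
end
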